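/- arXiv:1403.4930 — 2 statements merged into one kernel-verified Lean document; each statement's English description precedes it below -/
import Mathlib

section
/- A non-degenerate cscsc path is not a path of minimal length: let γ : [0,s] → ℝ² be a bounded curvature path admitting a partition 0 = t₀ < t₁ < t₂ < t₃ < t₄ < t₅ = s such that on [t₀,t₁], [t₂,t₃], [t₄,t₅] the path is an arc of a unit-radius circle (there exists c ∈ ℝ² with ‖γ(t) − c‖ = 1 throughout) and on [t₁,t₂], [t₃,t₄] the path is affine (a line segment), all five pieces having positive length. Then γ is not a length minimiser: there exists a bounded curvature path η with η(0) = γ(0), η'(0) = γ'(0), and the same final point and final direction as γ, whose length is strictly less than s. -/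
open Real Set

noncomputable section

/-- Points of the Euclidean plane. -/
abbrev Pt : Type := EuclideanSpace ℝ (Fin 2)

/-- `BCPath γ γ' s` : `γ : [0,s] → ℝ²` is a bounded curvature path (curvature bound 1):
continuously differentiable with derivative `γ'`, unit speed, and `γ'` 1-Lipschitz on `[0,s]`. -/
structure BCPath (γ γ' : ℝ → Pt) (s : ℝ) : Prop where
  nonneg : 0 ≤ s
  hasDeriv : ∀ t ∈ Icc (0:ℝ) s, HasDerivWithinAt γ (γ' t) (Icc (0:ℝ) s) t
  contDeriv : ContinuousOn γ' (Icc (0:ℝ) s)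
  unitSpeed : ∀ t ∈ Icc (0:ℝ) s, ‖γ' t‖ = 1
  lipDeriv : LipschitzOnWith 1 γ' (Icc (0:ℝ) s)

/-- Endpoint condition: the path starts at `x` tangent to `X` and ends at `y` tangent to `Y`. -/
def EndCond (γ γ' : ℝ → Pt) (s : ℝ) (x X y Y : Pt) : Prop :=
  γ 0 = x ∧ γ' 0 = X ∧ γ s = y ∧ γ' s = Y

/-- On `[a,b]` the path is an arc of a unit-radius circle. -/
def ArcOn (γ : ℝ → Pt) (a b : ℝ) : Prop :=
  ∃ c : Pt, ∀ t ∈ Icc a b, ‖γ t - c‖ = 1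

/-- On `[a,b]` the (unit-speed) path is affine: a line segment. -/
def SegOn (γ γ' : ℝ → Pt) (a b : ℝ) : Prop :=
  ∀ t ∈ Icc a b, γ t = γ a + (t - a) • γ' a

/-- `β` is a csc path on `[0,ℓ]` with break points `t₁ ≤ t₂`: circle arc, segment, circle arc
(pieces possibly of zero length). -/
def IsCSC (β β' : ℝ → Pt) (ℓ t₁ t₂ : ℝ) : Prop :=
  0 ≤ t₁ ∧ t₁ ≤ t₂ ∧ t₂ ≤ ℓ ∧ ArcOn β 0 t₁ ∧ SegOn β β' t₁ t₂ ∧ ArcOn β t₂ ℓ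

/-- `η` is a cs path on `[0,ℓ]`: a finite concatenation of line segments and unit-circle arcs. -/
def IsCS (η η' : ℝ → Pt) (ℓ : ℝ) : Prop :=
  ∃ (k : ℕ) (t : ℕ → ℝ), t 0 = 0 ∧ t k = ℓ ∧ (∀ i < k, t i ≤ t (i+1)) ∧
    ∀ i < k, SegOn η η' (t i) (t (i+1)) ∨ ArcOn η (t i) (t (i+1))

/-- Bounded curvature homotopy between `γ` (length `s₀`) and `η` (length `s₁`), both with
endpoint condition `(x,X),(y,Y)`: a one-parameter family of bounded curvature paths `F p`
of length `L p` with that endpoint condition, depending continuously on `p`. -/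
def BddHomotopic (x X y Y : Pt) (γ : ℝ → Pt) (s₀ : ℝ) (η : ℝ → Pt) (s₁ : ℝ) : Prop :=
  ∃ (F F' : ℝ → ℝ → Pt) (L : ℝ → ℝ),
    (∀ p ∈ Icc (0:ℝ) 1, BCPath (F p) (F' p) (L p) ∧
      F p 0 = x ∧ F' p 0 = X ∧ F p (L p) = y ∧ F' p (L p) = Y) ∧
    L 0 = s₀ ∧ L 1 = s₁ ∧
    (∀ t ∈ Icc (0:ℝ) s₀, F 0 t = γ t) ∧
    (∀ t ∈ Icc (0:ℝ) s₁, F 1 t = η t) ∧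
    ContinuousOn L (Icc (0:ℝ) 1) ∧
    ContinuousOn (fun q : ℝ × ℝ => F q.1 (q.2 * L q.1)) (Icc (0:ℝ) 1 ×ˢ Icc (0:ℝ) 1)

/-- `θ` is a continuous turning lift of the unit-speed path with derivative `γ'` on `[0,s]`. -/
def TurningLift (γ' : ℝ → Pt) (s : ℝ) (θ : ℝ → ℝ) : Prop :=
  ContinuousOn θ (Icc (0:ℝ) s) ∧
  ∀ t ∈ Icc (0:ℝ) s,
    γ' t = (WithLp.equiv 2 (Fin 2 → ℝ)).symm ![Real.cos (θ t), Real.sin (θ t)]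

namespace CSCSC

open Complex

def iso : ℂ ≃ₗᵢ[ℝ] Pt := Complex.isometryOfOrthonormal (EuclideanSpace.basisFun (Fin 2) ℝ)

structure BC (f f' : ℝ → ℂ) (a b : ℝ) : Prop where
  le : a ≤ b
  deriv : ∀ t ∈ Icc a b, HasDerivWithinAt f (f' t) (Icc a b) t
  cont : ContinuousOn f' (Icc a b)
  unit : ∀ t ∈ Icc a b, ‖f' t‖ = 1
  lip : LipschitzOnWith 1 f' (Icc a b)

section transfer

variable {E F : Type*} [NormedAddCommGroup E] [NormedSpace ℝ E]
  [NormedAddCommGroup F] [NormedSpace ℝ F]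

lemma comp_hasDerivWithinAt (e : E ≃ₗᵢ[ℝ] F) {f : ℝ → E} {v : E} {s : Set ℝ} {t : ℝ}
    (h : HasDerivWithinAt f v s t) :
    HasDerivWithinAt (fun u => e (f u)) (e v) s t := by
  have := (e.toContinuousLinearEquiv.toContinuousLinearMap.hasFDerivAt
    (x := f t)).comp_hasDerivWithinAt t h
  simpa [Function.comp_def] using this

lemma comp_lipschitzOnWith (e : E ≃ₗᵢ[ℝ] F) {f : ℝ → E} {s : Set ℝ}
    (h : LipschitzOnWith 1 f s) : LipschitzOnWith 1 (fun u => e (f u)) s := by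
  intro x hx y hy
  have he : edist (e (f x)) (e (f y)) = edist (f x) (f y) := e.isometry.edist_eq _ _
  rw [he]; exact h hx hy

end transfer

/-- transfer a `BCPath` to a complex path -/
lemma BCPath.toBC {γ γ' : ℝ → Pt} {s : ℝ} (h : BCPath γ γ' s) :
    BC (fun t => iso.symm (γ t)) (fun t => iso.symm (γ' t)) 0 s where
  le := h.nonneg
  deriv := fun t ht => comp_hasDerivWithinAt iso.symm (h.hasDeriv t ht)
  cont := iso.symm.continuous.comp_continuousOn h.contDeriv
  unit := fun t ht => by rw [iso.symm.norm_map]; exact h.unitSpeed t ht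
  lip := comp_lipschitzOnWith iso.symm h.lipDeriv

/-- transfer a complex path to a `BCPath` -/
lemma BC.toBCPath {f f' : ℝ → ℂ} {s : ℝ} (h : BC f f' 0 s) :
    BCPath (fun t => iso (f t)) (fun t => iso (f' t)) s where
  nonneg := h.le
  hasDeriv := fun t ht => comp_hasDerivWithinAt iso (h.deriv t ht)
  contDeriv := iso.continuous.comp_continuousOn h.cont
  unitSpeed := fun t ht => by rw [iso.norm_map]; exact h.unit t ht
  lipDeriv := comp_lipschitzOnWith iso h.lip

lemma BC.mono {f f' : ℝ → ℂ} {a b a' b' : ℝ} (h : BC f f' a b)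
    (ha : a ≤ a') (hab : a' ≤ b') (hb : b' ≤ b) : BC f f' a' b' where
  le := hab
  deriv := fun t ht => (h.deriv t (Icc_subset_Icc ha hb ht)).mono (Icc_subset_Icc ha hb)
  cont := h.cont.mono (Icc_subset_Icc ha hb)
  unit := fun t ht => h.unit t (Icc_subset_Icc ha hb ht)
  lip := h.lip.mono (Icc_subset_Icc ha hb)

/-- time shift -/
lemma BC.shift {f f' : ℝ → ℂ} {a b : ℝ} (h : BC f f' a b) (c : ℝ) :
    BC (fun t => f (t + c)) (fun t => f' (t + c)) (a - c) (b - c) where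
  le := by linarith [h.le]
  deriv := by
    intro t ht
    have hmaps : MapsTo (fun u : ℝ => u + c) (Icc (a - c) (b - c)) (Icc a b) := by
      intro u hu; simp only [mem_Icc] at hu ⊢; constructor <;> linarith [hu.1, hu.2]
    have h1 : HasDerivWithinAt (fun u : ℝ => u + c) 1 (Icc (a - c) (b - c)) t :=
      ((hasDerivWithinAt_id t _).add_const c)
    have := (h.deriv (t + c) ⟨by linarith [ht.1], by linarith [ht.2]⟩).scomp t h1 hmaps
    simpa [Function.comp_def] using this
  cont := by
    have hmaps : MapsTo (fun u : ℝ => u + c) (Icc (a - c) (b - c)) (Icc a b) := by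
      intro u hu; simp only [mem_Icc] at hu ⊢; constructor <;> linarith [hu.1, hu.2]
    exact h.cont.comp (by fun_prop) hmaps
  unit := fun t ht => h.unit (t + c) ⟨by linarith [ht.1], by linarith [ht.2]⟩
  lip := by
    intro x hx y hy
    have := h.lip (x := x + c) (y := y + c)
      ⟨by linarith [hx.1], by linarith [hx.2]⟩ ⟨by linarith [hy.1], by linarith [hy.2]⟩
    simpa [edist_add_right] using this

/-- space translation -/
lemma BC.subConst {f f' : ℝ → ℂ} {a b : ℝ} (h : BC f f' a b) (v : ℂ) :
    BC (fun t => f t - v) f' a b where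
  le := h.le
  deriv := fun t ht => (h.deriv t ht).sub_const v
  cont := h.cont
  unit := h.unit
  lip := h.lip

end CSCSC
namespace CSCSC
open Complex

lemma lip_glue {f g : ℝ → ℂ} {a m b : ℝ} (ham : a ≤ m) (hmb : m ≤ b)
    (hf : LipschitzOnWith 1 f (Icc a m)) (hg : LipschitzOnWith 1 g (Icc m b))
    (hm : f m = g m) :
    LipschitzOnWith 1 (fun t => if t ≤ m then f t else g t) (Icc a b) := by
  rw [lipschitzOnWith_iff_dist_le_mul] at hf hg ⊢
  have key : ∀ x ∈ Icc a b, ∀ y ∈ Icc a b, x ≤ y →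
      dist (if x ≤ m then f x else g x) (if y ≤ m then f y else g y) ≤ 1 * dist x y := by
    intro x hx y hy hxy
    by_cases hxm : x ≤ m
    · by_cases hym : y ≤ m
      · simp only [hxm, hym, if_pos]
        exact hf x ⟨hx.1, hxm⟩ y ⟨hy.1, hym⟩
      · push_neg at hym
        simp only [hxm, if_pos, if_neg (not_le.mpr hym)]
        have h1 : dist (f x) (g y) ≤ dist (f x) (f m) + dist (g m) (g y) := by
          calc dist (f x) (g y) ≤ dist (f x) (g m) + dist (g m) (g y) := dist_triangle _ _ _
          _ = dist (f x) (f m) + dist (g m) (g y) := by rw [hm]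
        have h2 : dist (f x) (f m) ≤ 1 * dist x m := hf x ⟨hx.1, hxm⟩ m ⟨ham, le_refl m⟩
        have h3 : dist (g m) (g y) ≤ 1 * dist m y := hg m ⟨le_refl m, hmb⟩ y ⟨hym.le, hy.2⟩
        have h4 : dist x m + dist m y = dist x y := by
          rw [Real.dist_eq, Real.dist_eq, Real.dist_eq,
            abs_of_nonpos (by linarith), abs_of_nonpos (by linarith),
            abs_of_nonpos (by linarith)]
          ring
        calc dist (f x) (g y) ≤ 1 * dist x m + 1 * dist m y := by linarith
        _ = 1 * dist x y := by rw [← h4]; ring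
    · push_neg at hxm
      have hym : ¬ y ≤ m := by push_neg; linarith
      simp only [if_neg (not_le.mpr hxm), if_neg hym]
      exact hg x ⟨hxm.le, hx.2⟩ y ⟨by push_neg at hym; linarith, hy.2⟩
  intro x hx y hy
  rcases le_total x y with hxy | hxy
  · exact key x hx y hy hxy
  · rw [dist_comm, dist_comm x y]; exact key y hy x hx hxy

lemma mem_nhdsWithin_left {a b c t : ℝ} (ht : t < c) (hsub : Icc a b ∩ Iio c ⊆ Icc a b ∩ Iic c) :
    Icc a b ∩ Iic c ∈ nhdsWithin t (Icc a b) :=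
  Filter.mem_of_superset (inter_mem_nhdsWithin _ (Iio_mem_nhds ht)) hsub

/-- concatenation of complex bounded curvature paths -/
lemma BC.trans {f f' g g' : ℝ → ℂ} {a m b : ℝ} (hf : BC f f' a m) (hg : BC g g' m b)
    (h0 : f m = g m) (h1 : f' m = g' m) :
    BC (fun t => if t ≤ m then f t else g t) (fun t => if t ≤ m then f' t else g' t) a b := by
  have ham := hf.le
  have hmb := hg.le
  have hab : a ≤ b := le_trans ham hmb
  have hmem_m : m ∈ Icc a m := ⟨ham, le_refl m⟩
  have hmem_m' : m ∈ Icc m b := ⟨le_refl m, hmb⟩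
  have hunion : Icc a m ∪ Icc m b = Icc a b := Icc_union_Icc_eq_Icc ham hmb
  have hsubL : Icc a m ⊆ Icc a b := Icc_subset_Icc le_rfl hmb
  have hsubR : Icc m b ⊆ Icc a b := Icc_subset_Icc ham le_rfl
  -- agreement of the glued function with the pieces
  have hFf : ∀ u ∈ Icc a m, (if u ≤ m then f u else g u) = f u := fun u hu => if_pos hu.2
  have hFg : ∀ u ∈ Icc m b, (if u ≤ m then f u else g u) = g u := by
    intro u hu
    rcases eq_or_lt_of_le hu.1 with h | h
    · simp [← h, h0]
    · exact if_neg (not_le.mpr h)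
  have hFf' : ∀ u ∈ Icc a m, (if u ≤ m then f' u else g' u) = f' u := fun u hu => if_pos hu.2
  have hFg' : ∀ u ∈ Icc m b, (if u ≤ m then f' u else g' u) = g' u := by
    intro u hu
    rcases eq_or_lt_of_le hu.1 with h | h
    · simp [← h, h1]
    · exact if_neg (not_le.mpr h)
  -- neighborhood facts
  have hnL : ∀ t ∈ Icc a b, t < m → Icc a m ∈ nhdsWithin t (Icc a b) := by
    intro t ht htm
    apply Filter.mem_of_superset (inter_mem_nhdsWithin (Icc a b) (Iio_mem_nhds htm))
    intro u hu; exact ⟨hu.1.1, le_of_lt hu.2⟩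
  have hnR : ∀ t ∈ Icc a b, m < t → Icc m b ∈ nhdsWithin t (Icc a b) := by
    intro t ht htm
    apply Filter.mem_of_superset (inter_mem_nhdsWithin (Icc a b) (Ioi_mem_nhds htm))
    intro u hu; exact ⟨le_of_lt hu.2, hu.1.2⟩
  refine ⟨hab, ?_, ?_, ?_, ?_⟩
  · -- derivative
    intro t ht
    rcases lt_trichotomy t m with htm | htm | htm
    · have hd : HasDerivWithinAt f (f' t) (Icc a m) t := hf.deriv t ⟨ht.1, htm.le⟩
      have hd2 : HasDerivWithinAt (fun u => if u ≤ m then f u else g u) (f' t) (Icc a m) t :=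
        hd.congr hFf (hFf t ⟨ht.1, htm.le⟩)
      rw [if_pos htm.le]
      exact hd2.mono_of_mem_nhdsWithin (hnL t ht htm)
    · subst htm
      have hdL : HasDerivWithinAt (fun u => if u ≤ t then f u else g u) (f' t) (Icc a t) t :=
        (hf.deriv t hmem_m).congr hFf (hFf t hmem_m)
      have hdR : HasDerivWithinAt (fun u => if u ≤ t then f u else g u) (f' t) (Icc t b) t := by
        have := (hg.deriv t hmem_m').congr hFg (hFg t hmem_m')
        rwa [← h1] at this
      have := hdL.union hdR
      rw [hunion] at this
      rw [if_pos (le_refl t)]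
      exact this
    · have hd : HasDerivWithinAt g (g' t) (Icc m b) t := hg.deriv t ⟨htm.le, ht.2⟩
      have hd2 : HasDerivWithinAt (fun u => if u ≤ m then f u else g u) (g' t) (Icc m b) t :=
        hd.congr hFg (hFg t ⟨htm.le, ht.2⟩)
      rw [if_neg (not_le.mpr htm)]
      exact hd2.mono_of_mem_nhdsWithin (hnR t ht htm)
  · -- continuity of derivative
    intro t ht
    rcases lt_trichotomy t m with htm | htm | htm
    · have hc : ContinuousWithinAt f' (Icc a m) t := hf.cont t ⟨ht.1, htm.le⟩
      have hc2 : ContinuousWithinAt (fun u => if u ≤ m then f' u else g' u) (Icc a m) t :=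
        hc.congr hFf' (hFf' t ⟨ht.1, htm.le⟩)
      exact hc2.mono_of_mem_nhdsWithin (hnL t ht htm)
    · subst htm
      have hcL : ContinuousWithinAt (fun u => if u ≤ t then f' u else g' u) (Icc a t) t :=
        (hf.cont t hmem_m).congr hFf' (hFf' t hmem_m)
      have hcR : ContinuousWithinAt (fun u => if u ≤ t then f' u else g' u) (Icc t b) t := by
        exact (hg.cont t hmem_m').congr hFg' (by rw [if_pos (le_refl t)]; exact h1)
      have := hcL.union hcR
      rwa [hunion] at this
    · have hc : ContinuousWithinAt g' (Icc m b) t := hg.cont t ⟨htm.le, ht.2⟩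
      have hc2 : ContinuousWithinAt (fun u => if u ≤ m then f' u else g' u) (Icc m b) t :=
        hc.congr hFg' (hFg' t ⟨htm.le, ht.2⟩)
      exact hc2.mono_of_mem_nhdsWithin (hnR t ht htm)
  · -- unit speed
    intro t ht
    by_cases htm : t ≤ m
    · rw [if_pos htm]; exact hf.unit t ⟨ht.1, htm⟩
    · rw [if_neg htm]; push_neg at htm; exact hg.unit t ⟨htm.le, ht.2⟩
  · -- Lipschitz
    exact lip_glue ham hmb hf.lip hg.lip h1

end CSCSC
namespace CSCSC
open Complex

/-- straight line piece -/
lemma BC.seg (P u : ℂ) (hu : ‖u‖ = 1) {a b : ℝ} (hab : a ≤ b) :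
    BC (fun t => P + ((t : ℂ) - (a : ℂ)) * u) (fun _ => u) a b where
  le := hab
  deriv := by
    intro t ht
    have h1 : HasDerivAt (fun y : ℝ => ((y : ℝ) : ℂ)) ((1 : ℝ) : ℂ) t :=
      (hasDerivAt_id t).ofReal_comp
    have h2 : HasDerivAt (fun y : ℝ => ((y : ℂ) - (a : ℂ)) * u) (u) t := by
      simpa using (h1.sub_const (a : ℂ)).mul_const u
    exact ((h2.const_add P).hasDerivWithinAt)
  cont := continuousOn_const
  unit := fun t _ => hu
  lip := ((LipschitzWith.const u).weaken (by norm_num)).lipschitzOnWith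

/-- circular arc piece: starts at `P` at time `a` with direction `w`, turning `σ` -/
lemma BC.arc (P w : ℂ) (hw : ‖w‖ = 1) (σ : ℝ) (hσ : σ = 1 ∨ σ = -1) {a b : ℝ} (hab : a ≤ b) :
    BC (fun t => P + (σ : ℂ) * I * w - Complex.exp (((σ * (t - a) : ℝ) : ℂ) * I) * ((σ : ℂ) * I * w))
       (fun t => Complex.exp (((σ * (t - a) : ℝ) : ℂ) * I) * w) a b := by
  have hσ2 : (σ : ℂ) * (σ : ℂ) = 1 := by rcases hσ with h | h <;> rw [h] <;> norm_num
  have hσn : ‖(σ : ℂ)‖ = 1 := by rcases hσ with h | h <;> rw [h] <;> simp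
  set E : ℝ → ℂ := fun t => Complex.exp (((σ * (t - a) : ℝ) : ℂ) * I) with hE
  have hEd : ∀ t : ℝ, HasDerivAt E ((σ : ℂ) * I * E t) t := by
    intro t
    have h1 : HasDerivAt (fun y : ℝ => σ * (y - a)) σ t := by
      simpa using ((hasDerivAt_id t).sub_const a).const_mul σ
    have h2 : HasDerivAt (fun y : ℝ => ((σ * (y - a) : ℝ) : ℂ)) ((σ : ℝ) : ℂ) t :=
      h1.ofReal_comp
    have h3 : HasDerivAt (fun y : ℝ => ((σ * (y - a) : ℝ) : ℂ) * I) ((σ : ℂ) * I) t :=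
      h2.mul_const I
    have := h3.cexp
    simpa [hE, mul_comm] using this
  have hEnorm : ∀ t : ℝ, ‖E t‖ = 1 := by
    intro t
    show ‖Complex.exp (((σ * (t - a) : ℝ) : ℂ) * I)‖ = 1
    rw [Complex.norm_exp_ofReal_mul_I]
  have hfd : ∀ t : ℝ,
      HasDerivAt (fun t => P + (σ : ℂ) * I * w - E t * ((σ : ℂ) * I * w)) (E t * w) t := by
    intro t
    have h4 : HasDerivAt (fun t => E t * ((σ : ℂ) * I * w))
        (((σ : ℂ) * I * E t) * ((σ : ℂ) * I * w)) t := (hEd t).mul_const _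
    have h5 : ((σ : ℂ) * I * E t) * ((σ : ℂ) * I * w) = -(E t * w) := by
      calc ((σ : ℂ) * I * E t) * ((σ : ℂ) * I * w)
          = ((σ : ℂ) * (σ : ℂ)) * (I * I) * (E t * w) := by ring
        _ = 1 * (-1) * (E t * w) := by rw [hσ2, Complex.I_mul_I]
        _ = -(E t * w) := by ring
    have := (h4.const_sub (P + (σ : ℂ) * I * w))
    rw [h5] at this
    simpa using this
  have hf'd : ∀ t : ℝ, HasDerivAt (fun t => E t * w) ((σ : ℂ) * I * E t * w) t :=
    fun t => (hEd t).mul_const w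
  refine ⟨hab, fun t _ => (hfd t).hasDerivWithinAt, ?_, ?_, ?_⟩
  · exact Continuous.continuousOn (by continuity)
  · intro t _
    rw [norm_mul, hEnorm t, hw, one_mul]
  · apply (convex_Icc a b).lipschitzOnWith_of_nnnorm_hasDerivWithin_le
      (f' := fun t => (σ : ℂ) * I * E t * w) (fun t _ => (hf'd t).hasDerivWithinAt)
    intro t _
    have : ‖(σ : ℂ) * I * E t * w‖ = 1 := by
      rw [norm_mul, norm_mul, norm_mul, hσn, hEnorm t, hw, Complex.norm_I]
      norm_num
    rw [← NNReal.coe_le_coe, coe_nnnorm, this, NNReal.coe_one]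

/-- on a sub-segment the derivative is constant -/
lemma seg_deriv {f f' : ℝ → ℂ} {A B a b : ℝ} (h : BC f f' A B)
    (hA : A ≤ a) (hab : a < b) (hB : b ≤ B)
    (hseg : ∀ t ∈ Icc a b, f t = f a + (t - a) • f' a) :
    ∀ t ∈ Icc a b, f' t = f' a := by
  intro t ht
  have hud : UniqueDiffWithinAt ℝ (Icc a b) t := (uniqueDiffOn_Icc hab) t ht
  have h1 : HasDerivWithinAt f (f' t) (Icc a b) t :=
    (h.deriv t (Icc_subset_Icc hA hB ht)).mono (Icc_subset_Icc hA hB)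
  have h2 : HasDerivWithinAt (fun u => f a + (u - a) • f' a) (f' a) (Icc a b) t := by
    have h0 : HasDerivWithinAt (fun u : ℝ => (u - a)) 1 (Icc a b) t :=
      (hasDerivWithinAt_id t _).sub_const a
    simpa using (h0.smul_const (f' a)).const_add (f a)
  have h3 : HasDerivWithinAt f (f' a) (Icc a b) t :=
    h2.congr (fun u hu => hseg u hu) (hseg t ht)
  rw [← h1.derivWithin hud, h3.derivWithin hud]

end CSCSC
namespace CSCSC
open Complex

lemma expI_hasDerivAt (κ a t : ℝ) :
    HasDerivAt (fun t : ℝ => Complex.exp (((κ * (t - a) : ℝ) : ℂ) * I))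
      ((κ : ℂ) * I * Complex.exp (((κ * (t - a) : ℝ) : ℂ) * I)) t := by
  have h1 : HasDerivAt (fun y : ℝ => κ * (y - a)) κ t := by
    simpa using ((hasDerivAt_id t).sub_const a).const_mul κ
  have h3 : HasDerivAt (fun y : ℝ => ((κ * (y - a) : ℝ) : ℂ) * I) ((κ : ℂ) * I) t :=
    (h1.ofReal_comp).mul_const I
  simpa [mul_comm] using h3.cexp

lemma expI_norm (κ a t : ℝ) : ‖Complex.exp (((κ * (t - a) : ℝ) : ℂ) * I)‖ = 1 := by
  rw [Complex.norm_exp_ofReal_mul_I]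

lemma expI_mul_neg (κ a t : ℝ) :
    Complex.exp (((κ * (t - a) : ℝ) : ℂ) * I) * Complex.exp (((-κ * (t - a) : ℝ) : ℂ) * I) = 1 := by
  rw [← Complex.exp_add, ← Complex.exp_zero]
  congr 1
  push_cast
  ring

/-- normal form of a unit-speed unit-circle arc -/
lemma arc_form {f f' : ℝ → ℂ} {A B a b : ℝ} {c : ℂ} (h : BC f f' A B)
    (hA : A ≤ a) (hab : a < b) (hB : b ≤ B)
    (harc : ∀ t ∈ Icc a b, ‖f t - c‖ = 1) :
    ∃ σ : ℝ, (σ = 1 ∨ σ = -1) ∧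
      (∀ t ∈ Icc a b, f' t = Complex.exp (((σ * (t - a) : ℝ) : ℂ) * I) * f' a) ∧
      (∀ t ∈ Icc a b, f t = f a + (σ : ℂ) * I * f' a -
        Complex.exp (((σ * (t - a) : ℝ) : ℂ) * I) * ((σ : ℂ) * I * f' a)) := by
  have ha : a ∈ Icc a b := ⟨le_rfl, hab.le⟩
  have sub : Icc a b ⊆ Icc A B := Icc_subset_Icc hA hB
  set g : ℝ → ℂ := fun t => f t - c with hg
  have hgd : ∀ t ∈ Icc a b, HasDerivWithinAt g (f' t) (Icc a b) t :=
    fun t ht => ((h.deriv t (sub ht)).mono sub).sub_const c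
  have hg1 : ∀ t ∈ Icc a b, ‖g t‖ = 1 := harc
  have hf'1 : ∀ t ∈ Icc a b, ‖f' t‖ = 1 := fun t ht => h.unit t (sub ht)
  have hgc : ContinuousOn g (Icc a b) := fun t ht => (hgd t ht).continuousWithinAt
  have hf'c : ContinuousOn f' (Icc a b) := h.cont.mono sub
  -- orthogonality
  have ortho : ∀ t ∈ Icc a b, (g t).re * (f' t).re + (g t).im * (f' t).im = 0 := by
    intro t ht
    have hud : UniqueDiffWithinAt ℝ (Icc a b) t := (uniqueDiffOn_Icc hab) t ht
    have hgre : HasDerivWithinAt (fun u => (g u).re) ((f' t).re) (Icc a b) t :=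
      Complex.reCLM.hasFDerivAt.comp_hasDerivWithinAt t (hgd t ht)
    have hgim : HasDerivWithinAt (fun u => (g u).im) ((f' t).im) (Icc a b) t :=
      Complex.imCLM.hasFDerivAt.comp_hasDerivWithinAt t (hgd t ht)
    have hr : HasDerivWithinAt (fun u => (g u).re * (g u).re + (g u).im * (g u).im)
        ((f' t).re * (g t).re + (g t).re * (f' t).re +
          ((f' t).im * (g t).im + (g t).im * (f' t).im)) (Icc a b) t :=
      (hgre.mul hgre).add (hgim.mul hgim)
    have hr0 : HasDerivWithinAt (fun u => (g u).re * (g u).re + (g u).im * (g u).im)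
        0 (Icc a b) t := by
      have hconst : HasDerivWithinAt (fun _ : ℝ => (1 : ℝ)) 0 (Icc a b) t :=
        hasDerivWithinAt_const t _ 1
      apply hconst.congr
      · intro u hu
        have h1 : ‖g u‖ = 1 := by exact hg1 u hu
        have h2 : Complex.normSq (g u) = 1 := by
          rw [← Complex.sq_norm, h1]; norm_num
        rw [Complex.normSq_apply] at h2
        linarith
      · have h1 : ‖g t‖ = 1 := by exact hg1 t ht
        have h2 : Complex.normSq (g t) = 1 := by
          rw [← Complex.sq_norm, h1]; norm_num
        rw [Complex.normSq_apply] at h2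
        linarith
    have := hr.derivWithin hud ▸ hr0.derivWithin hud
    have heq : (f' t).re * (g t).re + (g t).re * (f' t).re +
        ((f' t).im * (g t).im + (g t).im * (f' t).im) = 0 := by
      rw [← hr.derivWithin hud, hr0.derivWithin hud]
    linarith
  -- the turning sign
  set τ : ℝ → ℝ := fun t => ((starRingEnd ℂ) (g t) * f' t).im with hτ
  have claim1 : ∀ t ∈ Icc a b, (starRingEnd ℂ) (g t) * f' t = (τ t : ℂ) * I := by
    intro t ht
    apply Complex.ext
    · rw [Complex.mul_re]
      simp only [Complex.conj_re, Complex.conj_im]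
      have := ortho t ht
      simp only [Complex.ofReal_re, Complex.mul_re, Complex.I_re, Complex.I_im,
        Complex.ofReal_im]
      ring_nf
      linarith
    · simp [hτ]
  have claim2 : ∀ t ∈ Icc a b, τ t = 1 ∨ τ t = -1 := by
    intro t ht
    have habs : ‖(starRingEnd ℂ) (g t) * f' t‖ = 1 := by
      rw [norm_mul, Complex.norm_conj,
        hg1 t ht, hf'1 t ht, one_mul]
    rw [claim1 t ht] at habs
    rw [norm_mul, Complex.norm_I, Complex.norm_real, Real.norm_eq_abs, mul_one] at habs
    exact abs_eq (by norm_num : (0:ℝ) ≤ 1) |>.mp habs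
  have claim3 : ∀ t ∈ Icc a b, f' t = (τ t : ℂ) * I * g t := by
    intro t ht
    have hns : g t * (starRingEnd ℂ) (g t) = 1 := by
      have h1 : ‖g t‖ = 1 := by exact hg1 t ht
      have h2 : Complex.normSq (g t) = 1 := by rw [← Complex.sq_norm, h1]; norm_num
      rw [Complex.mul_conj, h2, Complex.ofReal_one]
    calc f' t = (g t * (starRingEnd ℂ) (g t)) * f' t := by rw [hns, one_mul]
      _ = g t * ((starRingEnd ℂ) (g t) * f' t) := by ring
      _ = g t * ((τ t : ℂ) * I) := by rw [claim1 t ht]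
      _ = (τ t : ℂ) * I * g t := by ring
  -- continuity of the sign
  have hτc : ContinuousOn τ (Icc a b) := by
    apply Complex.continuous_im.comp_continuousOn
    exact ((Complex.continuous_conj.comp_continuousOn hgc).mul hf'c)
  -- constancy of the sign
  have hτconst : ∀ t ∈ Icc a b, τ t = τ a := by
    intro t ht
    by_contra hne
    have hat : a ≤ t := ht.1
    have hsub2 : Icc a t ⊆ Icc a b := Icc_subset_Icc le_rfl ht.2
    have hc2 : ContinuousOn τ (Icc a t) := hτc.mono hsub2
    rcases claim2 a ha with h1 | h1 <;> rcases claim2 t ht with h2 | h2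
    · exact hne (by rw [h1, h2])
    · have h0 : (0:ℝ) ∈ Icc (τ t) (τ a) := by rw [h1, h2]; constructor <;> norm_num
      obtain ⟨x, hx, hx0⟩ := intermediate_value_Icc' hat hc2 h0
      rcases claim2 x (hsub2 hx) with h3 | h3 <;> rw [h3] at hx0 <;> norm_num at hx0
    · have h0 : (0:ℝ) ∈ Icc (τ a) (τ t) := by rw [h1, h2]; constructor <;> norm_num
      obtain ⟨x, hx, hx0⟩ := intermediate_value_Icc hat hc2 h0
      rcases claim2 x (hsub2 hx) with h3 | h3 <;> rw [h3] at hx0 <;> norm_num at hx0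
    · exact hne (by rw [h1, h2])
  set σ : ℝ := τ a with hσdef
  have hσ : σ = 1 ∨ σ = -1 := claim2 a ha
  have hσ2 : (σ : ℂ) * (σ : ℂ) = 1 := by rcases hσ with h | h <;> rw [h] <;> norm_num
  have hfg : ∀ t ∈ Icc a b, f' t = (σ : ℂ) * I * g t := by
    intro t ht
    rw [claim3 t ht, hτconst t ht]
  -- solve the ODE
  set E : ℝ → ℂ := fun t => Complex.exp (((σ * (t - a) : ℝ) : ℂ) * I) with hE
  set Em : ℝ → ℂ := fun t => Complex.exp (((-σ * (t - a) : ℝ) : ℂ) * I) with hEm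
  have hconstant : ∀ t ∈ Icc a b, Em t * g t = g a := by
    have hd : ∀ t ∈ Icc a b,
        HasDerivWithinAt (fun u => Em u * g u) 0 (Icc a b) t := by
      intro t ht
      have h1 : HasDerivWithinAt Em ((-σ : ℂ) * I * Em t) (Icc a b) t := by
        have := expI_hasDerivAt (-σ) a t
        simpa [hEm] using this.hasDerivWithinAt
      have h2 := h1.mul (hgd t ht)
      have h3 : (-σ : ℂ) * I * Em t * g t + Em t * f' t = 0 := by
        rw [hfg t ht]; ring
      rwa [h3] at h2
    intro t ht
    have hkey := (convex_Icc a b).norm_image_sub_le_of_norm_hasDerivWithin_le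
      (C := 0) (f' := fun _ => (0:ℂ)) hd (fun x _ => by simp) ha ht
    have : ‖Em t * g t - Em a * g a‖ ≤ 0 := by simpa using hkey
    have heq : Em t * g t = Em a * g a := by
      rwa [norm_le_zero_iff, sub_eq_zero] at this
    rw [heq]
    have : Em a = 1 := by
      rw [hEm]
      show Complex.exp (((-σ * (a - a) : ℝ) : ℂ) * I) = 1
      norm_num
    rw [this, one_mul]
  have hgt : ∀ t ∈ Icc a b, g t = E t * g a := by
    intro t ht
    have h1 := hconstant t ht
    have h2 : E t * (Em t * g t) = E t * g a := by rw [h1]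
    rwa [← mul_assoc, expI_mul_neg σ a t, one_mul] at h2
  have hf'a : f' a = (σ : ℂ) * I * g a := hfg a ha
  have hga : g a = -((σ : ℂ) * I) * f' a := by
    rw [hf'a]
    calc g a = ((σ:ℂ) * σ) * (-(I*I)) * g a := by
          rw [hσ2, Complex.I_mul_I]; ring
      _ = -((σ : ℂ) * I) * ((σ:ℂ) * I * g a) := by ring
  refine ⟨σ, hσ, ?_, ?_⟩
  · intro t ht
    rw [hfg t ht, hgt t ht, hf'a]
    show (σ:ℂ) * I * (E t * g a) = E t * (σ * I * g a)
    ring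
  · intro t ht
    have hft : f t = c + g t := by rw [hg]; ring
    have hfa : c = f a - g a := by rw [hg]; ring
    rw [hft, hgt t ht, hfa, hga]
    show f a - -((σ:ℂ) * I) * f' a + E t * (-((σ:ℂ) * I) * f' a)
        = f a + σ * I * f' a - E t * (σ * I * f' a)
    ring

end CSCSC
namespace CSCSC
open Complex

/-- Cramer's rule in the plane -/
lemma cramer {u v V : ℂ} {d : ℝ} (hd : d = ((starRingEnd ℂ) u * v).im) (hd0 : d ≠ 0) :
    ((((starRingEnd ℂ) V * v).im / d) : ℝ) • u + ((((starRingEnd ℂ) u * V).im / d) : ℝ) • v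
      = V := by
  subst hd
  have h1 : ((starRingEnd ℂ) u * v).im = u.re * v.im - u.im * v.re := by
    rw [Complex.mul_im, Complex.conj_re, Complex.conj_im]; ring
  have h2 : ((starRingEnd ℂ) V * v).im = V.re * v.im - V.im * v.re := by
    rw [Complex.mul_im, Complex.conj_re, Complex.conj_im]; ring
  have h3 : ((starRingEnd ℂ) u * V).im = u.re * V.im - u.im * V.re := by
    rw [Complex.mul_im, Complex.conj_re, Complex.conj_im]; ring
  rw [h2, h3]
  rw [h1] at hd0
  have hd0' : v.im * u.re - v.re * u.im ≠ 0 := by rwa [mul_comm v.im, mul_comm v.re]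
  rw [Complex.real_smul, Complex.real_smul]
  apply Complex.ext <;>
    simp only [Complex.add_re, Complex.add_im, Complex.mul_re, Complex.mul_im,
      Complex.ofReal_re, Complex.ofReal_im, zero_mul, sub_zero, add_zero,
      Complex.conj_re, Complex.conj_im, neg_mul, ← sub_eq_add_neg] <;>
    field_simp <;> ring

lemma sin_ne_zero_of {φ : ℝ} (h0 : 0 < φ) (hπ : φ ≠ π) (h2 : φ < 2 * π) :
    Real.sin φ ≠ 0 := by
  rcases lt_or_gt_of_ne hπ with h | h
  · exact ne_of_gt (Real.sin_pos_of_pos_of_lt_pi h0 h)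
  · have h1 : Real.sin (φ - π) > 0 :=
      Real.sin_pos_of_pos_of_lt_pi (by linarith) (by linarith)
    rw [Real.sin_sub_pi] at h1
    linarith

lemma one_sub_cos_ne_zero_of {φ : ℝ} (h0 : 0 < φ) (h2 : φ < 2 * π) :
    1 - Real.cos φ ≠ 0 := by
  intro hc
  have : Real.cos φ = 1 := by linarith
  rw [Real.cos_eq_one_iff_of_lt_of_lt (by linarith) h2] at this
  linarith

/-- from a nonzero derivative at `0` produce a nearby shorter point with side conditions -/
lemma exists_good {L : ℝ → ℝ} {c : ℝ} (hL : HasDerivAt L c 0) (hc : c ≠ 0)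
    {G : ℝ → Prop} (hG : ∀ᶠ ε in nhds (0 : ℝ), G ε) :
    ∃ ε : ℝ, G ε ∧ L ε < L 0 := by
  rw [hasDerivAt_iff_tendsto_slope] at hL
  rcases lt_or_gt_of_ne hc with hneg | hpos
  · have h1 : ∀ᶠ ε in nhdsWithin 0 (Ioi (0:ℝ)), slope L 0 ε < 0 := by
      have h0 : ∀ᶠ x in nhdsWithin 0 ({(0:ℝ)}ᶜ), slope L 0 x < 0 :=
        hL.eventually (Iio_mem_nhds hneg)
      exact h0.filter_mono (nhdsWithin_mono 0 (fun x hx => by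
        simp only [mem_compl_iff, mem_singleton_iff]
        exact ne_of_gt hx))
    have h2 : ∀ᶠ ε in nhdsWithin 0 (Ioi (0:ℝ)), G ε :=
      eventually_nhdsWithin_of_eventually_nhds hG
    have h3 : ∀ᶠ ε in nhdsWithin 0 (Ioi (0:ℝ)), ε ∈ Ioi (0:ℝ) :=
      eventually_mem_nhdsWithin
    obtain ⟨ε, hs, hGε, hε⟩ := (h1.and (h2.and h3)).exists
    refine ⟨ε, hGε, ?_⟩
    rw [slope_def_field] at hs
    have hεpos : (0:ℝ) < ε := hε
    rw [div_neg_iff] at hs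
    rcases hs with ⟨h4, h5⟩ | ⟨h4, h5⟩
    · linarith
    · linarith
  · have h1 : ∀ᶠ ε in nhdsWithin 0 (Iio (0:ℝ)), slope L 0 ε > 0 := by
      have h0 : ∀ᶠ x in nhdsWithin 0 ({(0:ℝ)}ᶜ), slope L 0 x > 0 :=
        hL.eventually (Ioi_mem_nhds hpos)
      exact h0.filter_mono (nhdsWithin_mono 0 (fun x hx => by
        simp only [mem_compl_iff, mem_singleton_iff]
        exact ne_of_lt hx))
    have h2 : ∀ᶠ ε in nhdsWithin 0 (Iio (0:ℝ)), G ε :=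
      eventually_nhdsWithin_of_eventually_nhds hG
    have h3 : ∀ᶠ ε in nhdsWithin 0 (Iio (0:ℝ)), ε ∈ Iio (0:ℝ) :=
      eventually_mem_nhdsWithin
    obtain ⟨ε, hs, hGε, hε⟩ := (h1.and (h2.and h3)).exists
    refine ⟨ε, hGε, ?_⟩
    rw [slope_def_field] at hs
    have hεneg : ε < (0:ℝ) := hε
    rw [gt_iff_lt, lt_div_iff_of_neg (by linarith : ε - 0 < 0)] at hs
    linarith
end CSCSC

namespace CSCSC
open Complex

lemma normSq_one' {u : ℂ} (hu : ‖u‖ = 1) : (starRingEnd ℂ) u * u = 1 := by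
  have h1 : ‖u‖ = 1 := by exact hu
  have h2 : Complex.normSq u = 1 := by rw [← Complex.sq_norm, h1]; norm_num
  rw [mul_comm, Complex.mul_conj, h2, Complex.ofReal_one]

lemma normExpI (x : ℝ) : ‖Complex.exp ((x : ℂ) * I)‖ = 1 := by
  rw [Complex.norm_exp_ofReal_mul_I]

lemma expI_add (x y : ℝ) :
    Complex.exp ((x : ℂ) * I) * Complex.exp ((y : ℂ) * I)
      = Complex.exp (((x + y : ℝ) : ℂ) * I) := by
  rw [← Complex.exp_add]
  congr 1
  push_cast
  ring

lemma conj_expI (x : ℝ) :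
    (starRingEnd ℂ) (Complex.exp ((x : ℂ) * I)) = Complex.exp (((-x : ℝ) : ℂ) * I) := by
  rw [← Complex.exp_conj]
  congr 1
  simp [map_mul, Complex.conj_I]

lemma sin_sign {σ : ℝ} (hσ : σ = 1 ∨ σ = -1) (x : ℝ) :
    Real.sin (σ * x) = σ * Real.sin x := by
  rcases hσ with h | h <;> rw [h] <;> simp

lemma cos_sign {σ : ℝ} (hσ : σ = 1 ∨ σ = -1) (x : ℝ) :
    Real.cos (σ * x) = Real.cos x := by
  rcases hσ with h | h <;> rw [h] <;> simp

lemma expI_hasDerivAt' (κ t : ℝ) :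
    HasDerivAt (fun t : ℝ => Complex.exp (((κ * t : ℝ) : ℂ) * I))
      ((κ : ℂ) * I * Complex.exp (((κ * t : ℝ) : ℂ) * I)) t := by
  have h1 : HasDerivAt (fun y : ℝ => κ * y) κ t := by
    simpa using (hasDerivAt_id t).const_mul κ
  have h3 : HasDerivAt (fun y : ℝ => ((κ * y : ℝ) : ℂ) * I) ((κ : ℂ) * I) t :=
    (h1.ofReal_comp).mul_const I
  simpa [mul_comm] using h3.cexp

end CSCSC

namespace CSCSC
open Complex

lemma im_rIz (r : ℝ) (z : ℂ) : ((r : ℂ) * I * z).im = r * z.re := by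
  simp [Complex.mul_im, Complex.mul_re]

lemma im_rz (r : ℝ) (z : ℂ) : ((r : ℂ) * z).im = r * z.im := by
  simp [Complex.mul_im]

lemma re_rz (r : ℝ) (z : ℂ) : ((r : ℂ) * z).re = r * z.re := by
  simp [Complex.mul_re]

lemma perturb (z0 u0 u1 u2 Q : ℂ) (σ₁ σ₂ a b φ₁ φ₂ : ℝ)
    (hσ₁ : σ₁ = 1 ∨ σ₁ = -1) (hσ₂ : σ₂ = 1 ∨ σ₂ = -1)
    (ha : 0 < a) (hb : 0 < b) (hφ₁ : 0 < φ₁) (hφ₂ : 0 < φ₂)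
    (hφ₂2 : φ₂ < 2 * π) (hφ₂π : φ₂ ≠ π)
    (hu0 : ‖u0‖ = 1)
    (hu1 : u1 = Complex.exp (((σ₁ * φ₁ : ℝ) : ℂ) * I) * u0)
    (hu2 : u2 = Complex.exp (((σ₂ * φ₂ : ℝ) : ℂ) * I) * u1)
    (hQ : Q = z0 + (σ₁ : ℂ) * I * u0 - (σ₁ : ℂ) * I * u1 + (a : ℂ) * u1
        + (σ₂ : ℂ) * I * u1 - (σ₂ : ℂ) * I * u2 + (b : ℂ) * u2) :
    ∃ (η η' : ℝ → ℂ) (m : ℝ), BC η η' 0 m ∧ 0 < m ∧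
      η 0 = z0 ∧ η' 0 = u0 ∧ η m = Q ∧ η' m = u2 ∧ m < φ₁ + a + φ₂ + b := by
  have hσ₁2 : σ₁ * σ₁ = 1 := by rcases hσ₁ with h | h <;> rw [h] <;> norm_num
  have hσ₂2 : σ₂ * σ₂ = 1 := by rcases hσ₂ with h | h <;> rw [h] <;> norm_num
  have hσ₂0 : σ₂ ≠ 0 := by rcases hσ₂ with h | h <;> rw [h] <;> norm_num
  have hσ₂2c : (σ₂ : ℂ) * (σ₂ : ℂ) = 1 := by exact_mod_cast hσ₂2
  have hu1n : ‖u1‖ = 1 := by rw [hu1, norm_mul, normExpI, one_mul, hu0]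
  have hu2n : ‖u2‖ = 1 := by rw [hu2, norm_mul, normExpI, one_mul, hu1n]
  have hcu11 : (starRingEnd ℂ) u1 * u1 = 1 := normSq_one' hu1n
  have hS : Real.sin φ₂ ≠ 0 := sin_ne_zero_of hφ₂ hφ₂π hφ₂2
  -- the family of competitors
  set w : ℝ → ℂ := fun ε => Complex.exp (((-σ₂ * ε : ℝ) : ℂ) * I) * u1 with hw
  set V : ℝ → ℂ := fun ε =>
    Q - z0 - (σ₁ : ℂ) * I * u0 + (σ₂ : ℂ) * I * u2 + ((σ₁ : ℂ) - (σ₂ : ℂ)) * (I * w ε) with hV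
  set den : ℝ → ℝ := fun ε => σ₂ * Real.sin (φ₂ + ε) with hden
  set Af : ℝ → ℝ := fun ε => ((starRingEnd ℂ) (V ε) * u2).im / den ε with hAf
  set Bf : ℝ → ℝ := fun ε => ((starRingEnd ℂ) (w ε) * V ε).im / den ε with hBf
  set L : ℝ → ℝ := fun ε => (φ₁ - σ₁ * σ₂ * ε) + Af ε + (φ₂ + ε) + Bf ε with hLdef
  have hwn : ∀ ε, ‖w ε‖ = 1 := by
    intro ε; simp only [hw]; rw [norm_mul, normExpI, one_mul, hu1n]
  have hw0 : w 0 = u1 := by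
    simp only [hw]
    rw [show (-σ₂ * 0 : ℝ) = 0 by ring]
    simp
  have hV0 : V 0 = (a : ℂ) * u1 + (b : ℂ) * u2 := by
    simp only [hV, hw0]
    rw [hQ]; ring
  -- basic unimodular geometry
  set c12 : ℂ := (starRingEnd ℂ) u1 * u2 with hc12
  have hc12exp : c12 = Complex.exp (((σ₂ * φ₂ : ℝ) : ℂ) * I) := by
    rw [hc12, hu2]
    calc (starRingEnd ℂ) u1 * (Complex.exp (((σ₂ * φ₂ : ℝ) : ℂ) * I) * u1)
        = Complex.exp (((σ₂ * φ₂ : ℝ) : ℂ) * I) * ((starRingEnd ℂ) u1 * u1) := by ring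
      _ = _ := by rw [hcu11, mul_one]
  have him12 : c12.im = σ₂ * Real.sin φ₂ := by
    rw [hc12exp, Complex.exp_ofReal_mul_I_im, sin_sign hσ₂]
  have hre12 : c12.re = Real.cos φ₂ := by
    rw [hc12exp, Complex.exp_ofReal_mul_I_re, cos_sign hσ₂]
  have hcross : ∀ ε, (starRingEnd ℂ) (w ε) * u2
      = Complex.exp (((σ₂ * (φ₂ + ε) : ℝ) : ℂ) * I) := by
    intro ε
    simp only [hw]
    rw [map_mul, conj_expI]
    calc Complex.exp (((-(-σ₂ * ε) : ℝ) : ℂ) * I) * (starRingEnd ℂ) u1 * u2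
        = Complex.exp (((σ₂ * ε : ℝ) : ℂ) * I) * ((starRingEnd ℂ) u1 * u2) := by
          rw [show (-(-σ₂ * ε) : ℝ) = σ₂ * ε by ring]; ring
      _ = Complex.exp (((σ₂ * ε : ℝ) : ℂ) * I) * Complex.exp (((σ₂ * φ₂ : ℝ) : ℂ) * I) := by
          rw [← hc12, hc12exp]
      _ = _ := by rw [expI_add, show (σ₂ * ε + σ₂ * φ₂ : ℝ) = σ₂ * (φ₂ + ε) by ring]
  have hdcross : ∀ ε, den ε = ((starRingEnd ℂ) (w ε) * u2).im := by
    intro ε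
    rw [hcross ε, Complex.exp_ofReal_mul_I_im, sin_sign hσ₂]
  have hexit : ∀ ε, Complex.exp (((σ₂ * (φ₂ + ε) : ℝ) : ℂ) * I) * w ε = u2 := by
    intro ε
    simp only [hw]
    rw [← mul_assoc, expI_add, show (σ₂ * (φ₂ + ε) + -σ₂ * ε : ℝ) = σ₂ * φ₂ by ring, ← hu2]
  have harc1 : ∀ ε, Complex.exp (((σ₁ * (φ₁ - σ₁ * σ₂ * ε) : ℝ) : ℂ) * I) * u0 = w ε := by
    intro ε
    simp only [hw]
    rw [hu1, ← mul_assoc, expI_add,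
      show (-σ₂ * ε + σ₁ * φ₁ : ℝ) = σ₁ * (φ₁ - σ₁ * σ₂ * ε) from by
        linear_combination (σ₂ * ε) * hσ₁2]
  -- numerator values at 0
  have hconjVu2 : ∀ ε, (starRingEnd ℂ) (V ε) * u2
      = (starRingEnd ℂ) (V ε) * u2 := fun _ => rfl
  have hn1val : ((starRingEnd ℂ) (V 0) * u2).im = a * (σ₂ * Real.sin φ₂) := by
    rw [hV0]
    have e1 : (starRingEnd ℂ) ((a : ℂ) * u1 + (b : ℂ) * u2) * u2
        = (a : ℂ) * c12 + (b : ℂ) * ((starRingEnd ℂ) u2 * u2) := by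
      rw [map_add, map_mul, map_mul, Complex.conj_ofReal, Complex.conj_ofReal, hc12]; ring
    rw [e1, normSq_one' hu2n, mul_one]
    rw [Complex.add_im, im_rz, Complex.ofReal_im, him12]
    ring
  have hn2val : ((starRingEnd ℂ) (w 0) * V 0).im = b * (σ₂ * Real.sin φ₂) := by
    rw [hw0, hV0]
    have e1 : (starRingEnd ℂ) u1 * ((a : ℂ) * u1 + (b : ℂ) * u2)
        = (a : ℂ) * ((starRingEnd ℂ) u1 * u1) + (b : ℂ) * c12 := by
      rw [hc12]; ring
    rw [e1, hcu11, mul_one]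
    rw [Complex.add_im, Complex.ofReal_im, im_rz, him12]
    ring
  have hden0 : den 0 = σ₂ * Real.sin φ₂ := by simp only [hden]; norm_num
  have hdenne : den 0 ≠ 0 := by rw [hden0]; exact mul_ne_zero hσ₂0 hS
  have hA0 : Af 0 = a := by
    simp only [hAf]
    rw [hn1val, hden0, mul_div_cancel_right₀ _ (mul_ne_zero hσ₂0 hS)]
  have hB0 : Bf 0 = b := by
    simp only [hBf]
    rw [hn2val, hden0, mul_div_cancel_right₀ _ (mul_ne_zero hσ₂0 hS)]
  have hL0 : L 0 = φ₁ + a + φ₂ + b := by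
    simp only [hLdef]
    rw [hA0, hB0]; ring
  -- derivatives at 0
  have hwd : HasDerivAt w (((-σ₂ : ℝ) : ℂ) * I * u1) 0 := by
    have h := (expI_hasDerivAt' (-σ₂) 0).mul_const u1
    have h2 : HasDerivAt w ((((-σ₂) : ℝ) : ℂ) * I * Complex.exp (((-σ₂ * 0 : ℝ) : ℂ) * I) * u1) 0 := h
    rw [show (-σ₂ * 0 : ℝ) = 0 by ring] at h2
    simpa using h2
  have hVd : HasDerivAt V (((σ₁ : ℂ) - (σ₂ : ℂ)) * (I * (((-σ₂ : ℝ) : ℂ) * I * u1))) 0 := by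
    have h1 : HasDerivAt (fun ε => I * w ε) (I * (((-σ₂ : ℝ) : ℂ) * I * u1)) 0 := hwd.const_mul I
    have h2 := h1.const_mul ((σ₁ : ℂ) - (σ₂ : ℂ))
    exact h2.const_add _
  set vd : ℂ := ((σ₁ : ℂ) - (σ₂ : ℂ)) * (I * (((-σ₂ : ℝ) : ℂ) * I * u1)) with hvd
  have hvdval : vd = ((σ₁ * σ₂ - 1 : ℝ) : ℂ) * u1 := by
    rw [hvd]
    push_cast
    linear_combination (((σ₁ : ℂ) - σ₂) * (-(σ₂ : ℂ)) * u1) * Complex.I_mul_I - u1 * hσ₂2c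
  -- conj composition helpers
  have hconjd : ∀ {f : ℝ → ℂ} {v : ℂ} {x : ℝ}, HasDerivAt f v x →
      HasDerivAt (fun ε => (starRingEnd ℂ) (f ε)) ((starRingEnd ℂ) v) x := by
    intro f v x hf
    have := (Complex.conjCLE.toContinuousLinearMap.hasFDerivAt (x := f x)).comp_hasDerivAt x hf
    simpa [Function.comp_def] using this
  have himd : ∀ {f : ℝ → ℂ} {v : ℂ} {x : ℝ}, HasDerivAt f v x →
      HasDerivAt (fun ε => (f ε).im) v.im x := by
    intro f v x hf
    have := (Complex.imCLM.hasFDerivAt (x := f x)).comp_hasDerivAt x hf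
    simpa [Function.comp_def] using this
  have hn1d : HasDerivAt (fun ε => ((starRingEnd ℂ) (V ε) * u2).im)
      ((σ₁ * σ₂ - 1) * (σ₂ * Real.sin φ₂)) 0 := by
    have h1 := (hconjd hVd).mul_const u2
    have h2 := himd h1
    have h3 : ((starRingEnd ℂ) vd * u2).im = (σ₁ * σ₂ - 1) * (σ₂ * Real.sin φ₂) := by
      rw [hvdval, map_mul, Complex.conj_ofReal, mul_assoc, im_rz, ← hc12, him12]
    rwa [h3] at h2
  have hn2d : HasDerivAt (fun ε => ((starRingEnd ℂ) (w ε) * V ε).im)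
      (σ₂ * (a + b * Real.cos φ₂)) 0 := by
    have h1 := (hconjd hwd).mul hVd
    have h2 := himd h1
    have h3 : ((starRingEnd ℂ) (((-σ₂ : ℝ) : ℂ) * I * u1) * V 0
        + (starRingEnd ℂ) (w 0) * vd).im = σ₂ * (a + b * Real.cos φ₂) := by
      have e1 : (starRingEnd ℂ) (((-σ₂ : ℝ) : ℂ) * I * u1) * V 0
          = (σ₂ : ℂ) * I * ((a : ℂ) + (b : ℂ) * c12) := by
        rw [hV0, map_mul, map_mul, Complex.conj_ofReal, Complex.conj_I, hc12]
        have e2 : (starRingEnd ℂ) u1 * ((a : ℂ) * u1 + (b : ℂ) * u2)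
            = (a : ℂ) + (b : ℂ) * ((starRingEnd ℂ) u1 * u2) := by
          linear_combination (a : ℂ) * hcu11
        push_cast
        linear_combination (-(σ₂:ℂ)) * (-I) * e2
      have e3 : (starRingEnd ℂ) (w 0) * vd = ((σ₁ * σ₂ - 1 : ℝ) : ℂ) := by
        rw [hw0, hvdval]
        calc (starRingEnd ℂ) u1 * (((σ₁ * σ₂ - 1 : ℝ) : ℂ) * u1)
            = ((σ₁ * σ₂ - 1 : ℝ) : ℂ) * ((starRingEnd ℂ) u1 * u1) := by ring
          _ = _ := by rw [hcu11, mul_one]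
      rw [e1, e3, Complex.add_im, im_rIz, Complex.ofReal_im, add_zero]
      have e4 : ((a : ℂ) + (b : ℂ) * c12).re = a + b * Real.cos φ₂ := by
        rw [Complex.add_re, Complex.ofReal_re, re_rz, hre12]
      rw [e4]
    rwa [h3] at h2
  have hdend : HasDerivAt den (σ₂ * Real.cos φ₂) 0 := by
    have h1 : HasDerivAt (fun ε : ℝ => φ₂ + ε) 1 0 := by
      simpa using (hasDerivAt_id (0:ℝ)).const_add φ₂
    have h2 := (h1.sin).const_mul σ₂
    simp only [add_zero, mul_one] at h2
    exact h2
  have hAd : HasDerivAt Af (((σ₁ * σ₂ - 1) * Real.sin φ₂ - a * Real.cos φ₂) / Real.sin φ₂) 0 := by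
    have h := hn1d.div hdend hdenne
    rw [hden0, hn1val] at h
    refine HasDerivAt.congr_deriv h ?_
    field_simp
  have hBd : HasDerivAt Bf (a / Real.sin φ₂) 0 := by
    have h := hn2d.div hdend hdenne
    rw [hden0, hn2val] at h
    refine HasDerivAt.congr_deriv h ?_
    field_simp
    ring
  have hLd : HasDerivAt L (a * (1 - Real.cos φ₂) / Real.sin φ₂) 0 := by
    have h1 : HasDerivAt (fun ε : ℝ => φ₁ - σ₁ * σ₂ * ε) (-(σ₁ * σ₂)) 0 := by
      simpa using ((hasDerivAt_id (0:ℝ)).const_mul (σ₁ * σ₂)).const_sub φ₁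
    have h2 : HasDerivAt (fun ε : ℝ => φ₂ + ε) 1 0 := by
      simpa using (hasDerivAt_id (0:ℝ)).const_add φ₂
    have h := ((h1.add hAd).add h2).add hBd
    refine HasDerivAt.congr_deriv h ?_
    field_simp
    ring
  have hc0 : a * (1 - Real.cos φ₂) / Real.sin φ₂ ≠ 0 :=
    div_ne_zero (mul_ne_zero (ne_of_gt ha) (one_sub_cos_ne_zero_of hφ₂ hφ₂2)) hS
  -- eventually all side conditions hold
  have hev : ∀ᶠ ε in nhds (0:ℝ), (0 < φ₁ - σ₁ * σ₂ * ε ∧ 0 < φ₂ + ε) ∧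
      (0 < Af ε ∧ 0 < Bf ε) ∧ den ε ≠ 0 := by
    have e1 : ∀ᶠ ε in nhds (0:ℝ), 0 < φ₁ - σ₁ * σ₂ * ε := by
      have hcont : ContinuousAt (fun ε : ℝ => φ₁ - σ₁ * σ₂ * ε) 0 := by fun_prop
      have hval : (0:ℝ) < φ₁ - σ₁ * σ₂ * 0 := by simpa
      exact hcont.eventually (eventually_gt_nhds hval)
    have e2 : ∀ᶠ ε in nhds (0:ℝ), 0 < φ₂ + ε := by
      have hcont : ContinuousAt (fun ε : ℝ => φ₂ + ε) 0 := by fun_prop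
      have hval : (0:ℝ) < φ₂ + 0 := by simpa
      exact hcont.eventually (eventually_gt_nhds hval)
    have e3 : ∀ᶠ ε in nhds (0:ℝ), 0 < Af ε := by
      have hval : (0:ℝ) < Af 0 := by rw [hA0]; exact ha
      exact hAd.continuousAt.eventually (eventually_gt_nhds hval)
    have e4 : ∀ᶠ ε in nhds (0:ℝ), 0 < Bf ε := by
      have hval : (0:ℝ) < Bf 0 := by rw [hB0]; exact hb
      exact hBd.continuousAt.eventually (eventually_gt_nhds hval)
    have e5 : ∀ᶠ ε in nhds (0:ℝ), den ε ≠ 0 := by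
      have hcont : ContinuousAt den 0 := hdend.continuousAt
      exact hcont.eventually_ne hdenne
    exact ((e1.and e2).and ((e3.and e4).and e5))
  obtain ⟨ε, ⟨⟨hψpos, hφpos⟩, ⟨hApos, hBpos⟩, hdne⟩, hLlt⟩ := exists_good hLd hc0 hev
  rw [hL0] at hLlt
  -- assemble the competitor path
  set ψ : ℝ := φ₁ - σ₁ * σ₂ * ε with hψ
  set m1 : ℝ := ψ with hm1
  set m2 : ℝ := m1 + Af ε with hm2
  set m3 : ℝ := m2 + (φ₂ + ε) with hm3
  set m4 : ℝ := m3 + Bf ε with hm4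
  have h01 : (0:ℝ) ≤ m1 := le_of_lt hψpos
  have h12 : m1 < m2 := by rw [hm2]; linarith
  have h23 : m2 < m3 := by rw [hm3]; linarith
  have h34 : m3 < m4 := by rw [hm4]; linarith
  set P1 : ℂ := z0 + (σ₁ : ℂ) * I * u0 - (σ₁ : ℂ) * I * (w ε) with hP1
  set P2 : ℂ := P1 + ((m2 : ℂ) - (m1 : ℂ)) * w ε with hP2
  set P3 : ℂ := P2 + (σ₂ : ℂ) * I * (w ε) - (σ₂ : ℂ) * I * u2 with hP3
  have b1 := BC.arc z0 u0 hu0 σ₁ hσ₁ (a := 0) (b := m1) h01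
  have b2 := BC.seg P1 (w ε) (hwn ε) (le_of_lt h12)
  have b3 := BC.arc P2 (w ε) (hwn ε) σ₂ hσ₂ (a := m2) (b := m3) (le_of_lt h23)
  have b4 := BC.seg P3 u2 hu2n (a := m3) (b := m4) (le_of_lt h34)
  -- junction 1
  have j1v : z0 + (σ₁ : ℂ) * I * u0
      - Complex.exp (((σ₁ * (m1 - 0) : ℝ) : ℂ) * I) * ((σ₁ : ℂ) * I * u0)
      = P1 + ((m1 : ℂ) - (m1 : ℂ)) * w ε := by
    rw [show (σ₁ * (m1 - 0) : ℝ) = σ₁ * ψ by rw [hm1]; ring]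
    rw [hP1]
    have h := harc1 ε
    linear_combination (-(σ₁ : ℂ)) * I * h
  have j1d : Complex.exp (((σ₁ * (m1 - 0) : ℝ) : ℂ) * I) * u0 = w ε := by
    rw [show (σ₁ * (m1 - 0) : ℝ) = σ₁ * ψ by rw [hm1]; ring]
    exact harc1 ε
  have b12 := b1.trans b2 j1v j1d
  -- junction 2
  have j2v : (if m2 ≤ m1 then z0 + (σ₁ : ℂ) * I * u0
        - Complex.exp (((σ₁ * (m2 - 0) : ℝ) : ℂ) * I) * ((σ₁ : ℂ) * I * u0)
      else P1 + ((m2 : ℂ) - (m1 : ℂ)) * w ε)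
      = P2 + (σ₂ : ℂ) * I * w ε
        - Complex.exp (((σ₂ * (m2 - m2) : ℝ) : ℂ) * I) * ((σ₂ : ℂ) * I * w ε) := by
    rw [if_neg (not_le.mpr h12)]
    rw [show (σ₂ * (m2 - m2) : ℝ) = 0 by ring]
    simp only [Complex.ofReal_zero, zero_mul, Complex.exp_zero, one_mul]
    rw [hP2]; ring
  have j2d : (if m2 ≤ m1 then Complex.exp (((σ₁ * (m2 - 0) : ℝ) : ℂ) * I) * u0
      else w ε) = Complex.exp (((σ₂ * (m2 - m2) : ℝ) : ℂ) * I) * w ε := by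
    rw [if_neg (not_le.mpr h12)]
    rw [show (σ₂ * (m2 - m2) : ℝ) = 0 by ring]
    simp
  have b123 := b12.trans b3 j2v j2d
  -- junction 3
  have hexitv : Complex.exp (((σ₂ * (m3 - m2) : ℝ) : ℂ) * I) * w ε = u2 := by
    rw [show (σ₂ * (m3 - m2) : ℝ) = σ₂ * (φ₂ + ε) by rw [hm3]; ring]
    exact hexit ε
  have j3v : (if m3 ≤ m2 then
        (if m3 ≤ m1 then z0 + (σ₁ : ℂ) * I * u0
          - Complex.exp (((σ₁ * (m3 - 0) : ℝ) : ℂ) * I) * ((σ₁ : ℂ) * I * u0)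
        else P1 + ((m3 : ℂ) - (m1 : ℂ)) * w ε)
      else P2 + (σ₂ : ℂ) * I * w ε
        - Complex.exp (((σ₂ * (m3 - m2) : ℝ) : ℂ) * I) * ((σ₂ : ℂ) * I * w ε))
      = P3 + ((m3 : ℂ) - (m3 : ℂ)) * u2 := by
    rw [if_neg (not_le.mpr h23)]
    rw [hP3]
    linear_combination (-(σ₂ : ℂ)) * I * hexitv
  have j3d : (if m3 ≤ m2 then
        (if m3 ≤ m1 then Complex.exp (((σ₁ * (m3 - 0) : ℝ) : ℂ) * I) * u0 else w ε)
      else Complex.exp (((σ₂ * (m3 - m2) : ℝ) : ℂ) * I) * w ε) = u2 := by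
    rw [if_neg (not_le.mpr h23)]
    exact hexitv
  have b1234 := b123.trans b4 j3v j3d
  -- endpoint values
  have hcram : (Af ε : ℝ) • w ε + (Bf ε : ℝ) • u2 = V ε := by
    have h := cramer (u := w ε) (v := u2) (V := V ε) (d := den ε) (hdcross ε) hdne
    exact h
  have hend : P3 + ((m4 : ℂ) - (m3 : ℂ)) * u2 = Q := by
    have hm43 : (m4 : ℂ) - (m3 : ℂ) = ((Bf ε : ℝ) : ℂ) := by
      rw [hm4]; push_cast; ring
    rw [hm43]
    have h := hcram
    rw [Complex.real_smul, Complex.real_smul] at h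
    simp only [hV] at h
    rw [hP3, hP2, hP1]
    have hm21 : (m2 : ℂ) - (m1 : ℂ) = ((Af ε : ℝ) : ℂ) := by
      rw [hm2]; push_cast; ring
    rw [hm21]
    linear_combination h
  refine ⟨_, _, m4, b1234, by linarith, ?_, ?_, ?_, ?_, by
    have : m4 = L ε := by simp only [hLdef, hm4, hm3, hm2, hm1, hψ]; rfl
    linarith⟩
  · show (if (0:ℝ) ≤ m3 then _ else _) = z0
    rw [if_pos (by linarith : (0:ℝ) ≤ m3), if_pos (by linarith : (0:ℝ) ≤ m2),
      if_pos (by linarith : (0:ℝ) ≤ m1)]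
    rw [show (σ₁ * ((0:ℝ) - 0) : ℝ) = 0 by ring]
    simp
  · show (if (0:ℝ) ≤ m3 then _ else _) = u0
    rw [if_pos (by linarith : (0:ℝ) ≤ m3), if_pos (by linarith : (0:ℝ) ≤ m2),
      if_pos (by linarith : (0:ℝ) ≤ m1)]
    rw [show (σ₁ * ((0:ℝ) - 0) : ℝ) = 0 by ring]
    simp
  · show (if m4 ≤ m3 then _ else _) = Q
    rw [if_neg (not_le.mpr h34)]
    exact hend
  · show (if m4 ≤ m3 then _ else _) = u2
    rw [if_neg (not_le.mpr h34)]

end CSCSC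

namespace CSCSC
open Complex

lemma expI_two_pi {σ : ℝ} (hσ : σ = 1 ∨ σ = -1) :
    Complex.exp (((σ * (2 * π) : ℝ) : ℂ) * I) = 1 := by
  rcases hσ with h | h <;> rw [h]
  · rw [show ((1 : ℝ) * (2 * π) : ℝ) = 2 * π by ring]
    exact_mod_cast Complex.exp_two_pi_mul_I
  · rw [show ((-1 : ℝ) * (2 * π) : ℝ) = -(2 * π) by ring]
    push_cast
    rw [neg_mul, Complex.exp_neg]
    rw [show ((2:ℂ) * π * I) = 2 * π * I by ring, Complex.exp_two_pi_mul_I, inv_one]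

lemma expI_pi {σ : ℝ} (hσ : σ = 1 ∨ σ = -1) :
    Complex.exp (((σ * π : ℝ) : ℂ) * I) = -1 := by
  rcases hσ with h | h <;> rw [h]
  · rw [show ((1 : ℝ) * π : ℝ) = π by ring]
    exact_mod_cast Complex.exp_pi_mul_I
  · rw [show ((-1 : ℝ) * π : ℝ) = -π by ring]
    push_cast
    rw [neg_mul, Complex.exp_neg, show ((π:ℂ) * I) = π * I by ring, Complex.exp_pi_mul_I]
    norm_num

/-- package the final answer back into the plane -/
lemma finish (γ γ' : ℝ → Pt) {f f' : ℝ → ℂ} {ℓ s : ℝ}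
    (hbc : BC f f' 0 ℓ)
    (h0 : f 0 = iso.symm (γ 0)) (h0' : f' 0 = iso.symm (γ' 0))
    (h1 : f ℓ = iso.symm (γ s)) (h1' : f' ℓ = iso.symm (γ' s)) (hlt : ℓ < s) :
    ∃ (η η' : ℝ → Pt) (ℓ' : ℝ), BCPath η η' ℓ' ∧
      η 0 = γ 0 ∧ η' 0 = γ' 0 ∧ η ℓ' = γ s ∧ η' ℓ' = γ' s ∧ ℓ' < s := by
  refine ⟨fun t => iso (f t), fun t => iso (f' t), ℓ, hbc.toBCPath, ?_, ?_, ?_, ?_, hlt⟩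
  · show iso (f 0) = γ 0
    rw [h0, LinearIsometryEquiv.apply_symm_apply]
  · show iso (f' 0) = γ' 0
    rw [h0', LinearIsometryEquiv.apply_symm_apply]
  · show iso (f ℓ) = γ s
    rw [h1, LinearIsometryEquiv.apply_symm_apply]
  · show iso (f' ℓ) = γ' s
    rw [h1', LinearIsometryEquiv.apply_symm_apply]

end CSCSC


open Complex CSCSC

/-- A non-degenerate cscsc path is not a path of minimal length. -/
theorem cscsc_not_minimal (γ γ' : ℝ → Pt) (s t₁ t₂ t₃ t₄ : ℝ)
    (h : BCPath γ γ' s)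
    (h01 : 0 < t₁) (h12 : t₁ < t₂) (h23 : t₂ < t₃) (h34 : t₃ < t₄) (h4s : t₄ < s)
    (harc₁ : ArcOn γ 0 t₁) (hseg₁ : SegOn γ γ' t₁ t₂) (harc₂ : ArcOn γ t₂ t₃)
    (hseg₂ : SegOn γ γ' t₃ t₄) (harc₃ : ArcOn γ t₄ s) :
    ∃ (η η' : ℝ → Pt) (ℓ : ℝ), BCPath η η' ℓ ∧
      η 0 = γ 0 ∧ η' 0 = γ' 0 ∧ η ℓ = γ s ∧ η' ℓ = γ' s ∧ ℓ < s := by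
  classical
  -- move to the complex plane
  set ζ : ℝ → ℂ := fun t => iso.symm (γ t) with hζ
  set ζ' : ℝ → ℂ := fun t => iso.symm (γ' t) with hζ'
  have hBC : BC ζ ζ' 0 s := BCPath.toBC h
  -- transfer the hypotheses
  have hIcc1 : Icc (0:ℝ) t₁ ⊆ Icc 0 s := Icc_subset_Icc le_rfl (by linarith)
  obtain ⟨c₁, hc₁⟩ := harc₁
  have harc1' : ∀ t ∈ Icc (0:ℝ) t₁, ‖ζ t - iso.symm c₁‖ = 1 := by
    intro t ht
    rw [show ζ t - iso.symm c₁ = iso.symm (γ t - c₁) from by simp [hζ, map_sub],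
      iso.symm.norm_map]
    exact hc₁ t ht
  obtain ⟨c₂, hc₂⟩ := harc₂
  have harc2' : ∀ t ∈ Icc t₂ t₃, ‖ζ t - iso.symm c₂‖ = 1 := by
    intro t ht
    rw [show ζ t - iso.symm c₂ = iso.symm (γ t - c₂) from by simp [hζ, map_sub],
      iso.symm.norm_map]
    exact hc₂ t ht
  have hseg1' : ∀ t ∈ Icc t₁ t₂, ζ t = ζ t₁ + (t - t₁) • ζ' t₁ := by
    intro t ht
    rw [hζ, hζ']
    show iso.symm (γ t) = iso.symm (γ t₁) + (t - t₁) • iso.symm (γ' t₁)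
    rw [← map_smul, ← map_add]
    exact congrArg _ (hseg₁ t ht)
  have hseg2' : ∀ t ∈ Icc t₃ t₄, ζ t = ζ t₃ + (t - t₃) • ζ' t₃ := by
    intro t ht
    rw [hζ, hζ']
    show iso.symm (γ t) = iso.symm (γ t₃) + (t - t₃) • iso.symm (γ' t₃)
    rw [← map_smul, ← map_add]
    exact congrArg _ (hseg₂ t ht)
  -- normal forms
  obtain ⟨σ₁, hσ₁, hd1, hp1⟩ := arc_form hBC le_rfl h01 (by linarith) harc1'
  obtain ⟨σ₂, hσ₂, hd2, hp2⟩ := arc_form hBC (by linarith) h23 (by linarith) harc2'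
  have hsd1 : ∀ t ∈ Icc t₁ t₂, ζ' t = ζ' t₁ :=
    seg_deriv hBC (by linarith) h12 (by linarith) hseg1'
  have hsd2 : ∀ t ∈ Icc t₃ t₄, ζ' t = ζ' t₃ :=
    seg_deriv hBC (by linarith) h34 (by linarith) hseg2'
  set u0 : ℂ := ζ' 0 with hu0def
  set u1 : ℂ := ζ' t₁ with hu1def
  set u2 : ℂ := ζ' t₃ with hu2def
  have hu0n : ‖u0‖ = 1 := hBC.unit 0 ⟨le_rfl, by linarith⟩
  have hmem1 : t₁ ∈ Icc (0:ℝ) t₁ := ⟨le_of_lt h01, le_rfl⟩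
  have hmem2 : t₂ ∈ Icc t₁ t₂ := ⟨le_of_lt h12, le_rfl⟩
  have hmem3 : t₃ ∈ Icc t₂ t₃ := ⟨le_of_lt h23, le_rfl⟩
  have hmem4 : t₄ ∈ Icc t₃ t₄ := ⟨le_of_lt h34, le_rfl⟩
  have hu1exp : u1 = Complex.exp (((σ₁ * t₁ : ℝ) : ℂ) * I) * u0 := by
    have := hd1 t₁ hmem1
    rwa [show (σ₁ * (t₁ - 0) : ℝ) = σ₁ * t₁ by ring] at this
  have hz1 : ζ t₁ = ζ 0 + (σ₁ : ℂ) * I * u0 - (σ₁ : ℂ) * I * u1 := by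
    have h := hp1 t₁ hmem1
    rw [show (σ₁ * (t₁ - 0) : ℝ) = σ₁ * t₁ by ring] at h
    rw [h]
    linear_combination ((σ₁ : ℂ)) * I * hu1exp
  have hz2 : ζ t₂ = ζ t₁ + ((t₂ - t₁ : ℝ) : ℂ) * u1 := by
    have h := hseg1' t₂ hmem2
    rwa [Complex.real_smul] at h
  have hu12 : ζ' t₂ = u1 := hsd1 t₂ hmem2
  have hu2exp : u2 = Complex.exp (((σ₂ * (t₃ - t₂) : ℝ) : ℂ) * I) * u1 := by
    have := hd2 t₃ hmem3
    rwa [hu12] at this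
  have hz3 : ζ t₃ = ζ t₂ + (σ₂ : ℂ) * I * u1 - (σ₂ : ℂ) * I * u2 := by
    have h := hp2 t₃ hmem3
    rw [hu12] at h
    rw [h]
    linear_combination ((σ₂ : ℂ)) * I * hu2exp
  have hz4 : ζ t₄ = ζ t₃ + ((t₄ - t₃ : ℝ) : ℂ) * u2 := by
    have h := hseg2' t₄ hmem4
    rwa [Complex.real_smul] at h
  have hu24 : ζ' t₄ = u2 := hsd2 t₄ hmem4
  have hπpos := Real.pi_pos
  rcases le_or_gt (2 * π) (t₃ - t₂) with hcase2pi | hlt2pi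
  · -- excision of a full loop
    have ht2π : t₂ + 2 * π ≤ t₃ := by linarith
    have b1 : BC ζ ζ' 0 t₂ := hBC.mono le_rfl (by linarith) (by linarith)
    have b2 : BC (fun t => ζ (t + 2 * π)) (fun t => ζ' (t + 2 * π)) t₂ (s - 2 * π) := by
      have h2 := (hBC.mono (a' := t₂ + 2 * π) (b' := s) (by linarith) (by linarith)
        le_rfl).shift (2 * π)
      rwa [show t₂ + 2 * π - 2 * π = t₂ by ring] at h2
    have hval : ζ (t₂ + 2 * π) = ζ t₂ := by
      have hh := hp2 (t₂ + 2 * π) ⟨by linarith, by linarith⟩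
      rw [hu12, show (σ₂ * (t₂ + 2 * π - t₂) : ℝ) = σ₂ * (2 * π) by ring,
        expI_two_pi hσ₂, one_mul] at hh
      rw [hh]; ring
    have hder : ζ' (t₂ + 2 * π) = ζ' t₂ := by
      have hh := hd2 (t₂ + 2 * π) ⟨by linarith, by linarith⟩
      rw [hu12, show (σ₂ * (t₂ + 2 * π - t₂) : ℝ) = σ₂ * (2 * π) by ring,
        expI_two_pi hσ₂, one_mul] at hh
      rw [hh, hu12]
    have bfull := b1.trans b2 hval.symm hder.symm
    apply finish γ γ' bfull
    · rw [if_pos (by linarith : (0:ℝ) ≤ t₂)]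
    · rw [if_pos (by linarith : (0:ℝ) ≤ t₂)]
    · rw [if_neg (by push_neg; linarith : ¬ s - 2 * π ≤ t₂)]
      rw [show s - 2 * π + 2 * π = s by ring]
    · rw [if_neg (by push_neg; linarith : ¬ s - 2 * π ≤ t₂)]
      rw [show s - 2 * π + 2 * π = s by ring]
    · linarith
  · rcases eq_or_ne (t₃ - t₂) π with hcaseπ | hneπ
    · -- surgery using the half-turn
      have hu2u1 : u2 = -u1 := by
        rw [hu2exp, hcaseπ, expI_pi hσ₂]; ring
      rcases le_or_gt (t₄ - t₃) (t₂ - t₁) with hba | hab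
      · -- second segment is the shorter one
        have hbpos : 0 < t₄ - t₃ := by linarith
        have b1 : BC ζ ζ' 0 (t₂ - (t₄ - t₃)) :=
          hBC.mono le_rfl (by linarith) (by linarith)
        have b2 : BC (fun t => ζ (t + (t₄ - t₃)) - ((t₄ - t₃ : ℝ) : ℂ) * u1)
            (fun t => ζ' (t + (t₄ - t₃))) (t₂ - (t₄ - t₃)) (t₃ - (t₄ - t₃)) := by
          have h2 := ((hBC.mono (a' := t₂) (b' := t₃) (by linarith) (by linarith)
            (by linarith)).shift (t₄ - t₃)).subConst (((t₄ - t₃ : ℝ) : ℂ) * u1)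
          exact h2
        have b3 : BC (fun t => ζ (t + 2 * (t₄ - t₃))) (fun t => ζ' (t + 2 * (t₄ - t₃)))
            (t₃ - (t₄ - t₃)) (s - 2 * (t₄ - t₃)) := by
          have h2 := (hBC.mono (a' := t₃ + (t₄ - t₃)) (b' := s) (by linarith) (by linarith)
            le_rfl).shift (2 * (t₄ - t₃))
          rwa [show t₃ + (t₄ - t₃) - 2 * (t₄ - t₃) = t₃ - (t₄ - t₃) by ring] at h2
        have j1v : ζ (t₂ - (t₄ - t₃))
            = ζ (t₂ - (t₄ - t₃) + (t₄ - t₃)) - ((t₄ - t₃ : ℝ) : ℂ) * u1 := by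
          have h1 := hseg1' (t₂ - (t₄ - t₃)) ⟨by linarith, by linarith⟩
          rw [show t₂ - (t₄ - t₃) + (t₄ - t₃) = t₂ by ring, hz2, h1, Complex.real_smul]
          push_cast
          ring
        have j1d : ζ' (t₂ - (t₄ - t₃)) = ζ' (t₂ - (t₄ - t₃) + (t₄ - t₃)) := by
          have h1 := hsd1 (t₂ - (t₄ - t₃)) ⟨by linarith, by linarith⟩
          rw [show t₂ - (t₄ - t₃) + (t₄ - t₃) = t₂ by ring, h1, hu12]
        have b12 := b1.trans b2 j1v j1d
        have j2v : (if t₃ - (t₄ - t₃) ≤ t₂ - (t₄ - t₃) then ζ (t₃ - (t₄ - t₃))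
            else ζ (t₃ - (t₄ - t₃) + (t₄ - t₃)) - ((t₄ - t₃ : ℝ) : ℂ) * u1)
            = ζ (t₃ - (t₄ - t₃) + 2 * (t₄ - t₃)) := by
          rw [if_neg (by push_neg; linarith : ¬ t₃ - (t₄ - t₃) ≤ t₂ - (t₄ - t₃))]
          rw [show t₃ - (t₄ - t₃) + (t₄ - t₃) = t₃ by ring,
            show t₃ - (t₄ - t₃) + 2 * (t₄ - t₃) = t₃ + (t₄ - t₃) by ring]
          have h3 := hseg2' (t₃ + (t₄ - t₃)) ⟨by linarith, by linarith⟩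
          rw [h3, Complex.real_smul, hu2u1]
          push_cast
          ring
        have j2d : (if t₃ - (t₄ - t₃) ≤ t₂ - (t₄ - t₃) then ζ' (t₃ - (t₄ - t₃))
            else ζ' (t₃ - (t₄ - t₃) + (t₄ - t₃)))
            = ζ' (t₃ - (t₄ - t₃) + 2 * (t₄ - t₃)) := by
          rw [if_neg (by push_neg; linarith : ¬ t₃ - (t₄ - t₃) ≤ t₂ - (t₄ - t₃))]
          rw [show t₃ - (t₄ - t₃) + (t₄ - t₃) = t₃ by ring,
            show t₃ - (t₄ - t₃) + 2 * (t₄ - t₃) = t₃ + (t₄ - t₃) by ring]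
          rw [hsd2 (t₃ + (t₄ - t₃)) ⟨by linarith, by linarith⟩]
        have bfull := b12.trans b3 j2v j2d
        apply finish γ γ' bfull
        · rw [if_pos (by linarith : (0:ℝ) ≤ t₃ - (t₄ - t₃)),
            if_pos (by linarith : (0:ℝ) ≤ t₂ - (t₄ - t₃))]
        · rw [if_pos (by linarith : (0:ℝ) ≤ t₃ - (t₄ - t₃)),
            if_pos (by linarith : (0:ℝ) ≤ t₂ - (t₄ - t₃))]
        · rw [if_neg (by push_neg; linarith : ¬ s - 2 * (t₄ - t₃) ≤ t₃ - (t₄ - t₃))]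
          rw [show s - 2 * (t₄ - t₃) + 2 * (t₄ - t₃) = s by ring]
        · rw [if_neg (by push_neg; linarith : ¬ s - 2 * (t₄ - t₃) ≤ t₃ - (t₄ - t₃))]
          rw [show s - 2 * (t₄ - t₃) + 2 * (t₄ - t₃) = s by ring]
        · linarith
      · -- first segment is the shorter one
        have hapos : 0 < t₂ - t₁ := by linarith
        have b1 : BC ζ ζ' 0 t₁ := hBC.mono le_rfl (by linarith) (by linarith)
        have b2 : BC (fun t => ζ (t + (t₂ - t₁)) - ((t₂ - t₁ : ℝ) : ℂ) * u1)
            (fun t => ζ' (t + (t₂ - t₁))) t₁ (t₃ - (t₂ - t₁)) := by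
          have h2 := ((hBC.mono (a' := t₂) (b' := t₃) (by linarith) (by linarith)
            (by linarith)).shift (t₂ - t₁)).subConst (((t₂ - t₁ : ℝ) : ℂ) * u1)
          rwa [show t₂ - (t₂ - t₁) = t₁ by ring] at h2
        have b3 : BC (fun t => ζ (t + 2 * (t₂ - t₁))) (fun t => ζ' (t + 2 * (t₂ - t₁)))
            (t₃ - (t₂ - t₁)) (s - 2 * (t₂ - t₁)) := by
          have h2 := (hBC.mono (a' := t₃ + (t₂ - t₁)) (b' := s) (by linarith) (by linarith)
            le_rfl).shift (2 * (t₂ - t₁))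
          rwa [show t₃ + (t₂ - t₁) - 2 * (t₂ - t₁) = t₃ - (t₂ - t₁) by ring] at h2
        have j1v : ζ t₁ = ζ (t₁ + (t₂ - t₁)) - ((t₂ - t₁ : ℝ) : ℂ) * u1 := by
          rw [show t₁ + (t₂ - t₁) = t₂ by ring, hz2]
          ring
        have j1d : ζ' t₁ = ζ' (t₁ + (t₂ - t₁)) := by
          rw [show t₁ + (t₂ - t₁) = t₂ by ring, hu12]
        have b12 := b1.trans b2 j1v j1d
        have j2v : (if t₃ - (t₂ - t₁) ≤ t₁ then ζ (t₃ - (t₂ - t₁))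
            else ζ (t₃ - (t₂ - t₁) + (t₂ - t₁)) - ((t₂ - t₁ : ℝ) : ℂ) * u1)
            = ζ (t₃ - (t₂ - t₁) + 2 * (t₂ - t₁)) := by
          rw [if_neg (by push_neg; linarith : ¬ t₃ - (t₂ - t₁) ≤ t₁)]
          rw [show t₃ - (t₂ - t₁) + (t₂ - t₁) = t₃ by ring,
            show t₃ - (t₂ - t₁) + 2 * (t₂ - t₁) = t₃ + (t₂ - t₁) by ring]
          have h3 := hseg2' (t₃ + (t₂ - t₁)) ⟨by linarith, by linarith⟩
          rw [h3, Complex.real_smul, hu2u1]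
          push_cast
          ring
        have j2d : (if t₃ - (t₂ - t₁) ≤ t₁ then ζ' (t₃ - (t₂ - t₁))
            else ζ' (t₃ - (t₂ - t₁) + (t₂ - t₁)))
            = ζ' (t₃ - (t₂ - t₁) + 2 * (t₂ - t₁)) := by
          rw [if_neg (by push_neg; linarith : ¬ t₃ - (t₂ - t₁) ≤ t₁)]
          rw [show t₃ - (t₂ - t₁) + (t₂ - t₁) = t₃ by ring,
            show t₃ - (t₂ - t₁) + 2 * (t₂ - t₁) = t₃ + (t₂ - t₁) by ring]
          rw [hsd2 (t₃ + (t₂ - t₁)) ⟨by linarith, by linarith⟩]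
        have bfull := b12.trans b3 j2v j2d
        apply finish γ γ' bfull
        · rw [if_pos (by linarith : (0:ℝ) ≤ t₃ - (t₂ - t₁)),
            if_pos (by linarith : (0:ℝ) ≤ t₁)]
        · rw [if_pos (by linarith : (0:ℝ) ≤ t₃ - (t₂ - t₁)),
            if_pos (by linarith : (0:ℝ) ≤ t₁)]
        · rw [if_neg (by push_neg; linarith : ¬ s - 2 * (t₂ - t₁) ≤ t₃ - (t₂ - t₁))]
          rw [show s - 2 * (t₂ - t₁) + 2 * (t₂ - t₁) = s by ring]
        · rw [if_neg (by push_neg; linarith : ¬ s - 2 * (t₂ - t₁) ≤ t₃ - (t₂ - t₁))]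
          rw [show s - 2 * (t₂ - t₁) + 2 * (t₂ - t₁) = s by ring]
        · linarith
    · -- generic perturbation
      have hQchain : ζ t₄ = ζ 0 + (σ₁ : ℂ) * I * u0 - (σ₁ : ℂ) * I * u1
          + ((t₂ - t₁ : ℝ) : ℂ) * u1 + (σ₂ : ℂ) * I * u1 - (σ₂ : ℂ) * I * u2
          + ((t₄ - t₃ : ℝ) : ℂ) * u2 := by
        rw [hz4, hz3, hz2, hz1]
        try ring
      obtain ⟨g, g', m, gbc, hmpos, hg0, hg0', hgQ, hgu2, hmlt⟩ :=
        perturb (ζ 0) u0 u1 u2 (ζ t₄) σ₁ σ₂ (t₂ - t₁) (t₄ - t₃) t₁ (t₃ - t₂)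
          hσ₁ hσ₂ (by linarith) (by linarith) h01 (by linarith) hlt2pi hneπ
          hu0n hu1exp hu2exp hQchain
      have btail : BC (fun t => ζ (t + (t₄ - m))) (fun t => ζ' (t + (t₄ - m)))
          m (m + (s - t₄)) := by
        have h2 := (hBC.mono (a' := t₄) (b' := s) (by linarith) (by linarith)
          le_rfl).shift (t₄ - m)
        rwa [show t₄ - (t₄ - m) = m by ring, show s - (t₄ - m) = m + (s - t₄) by ring] at h2
      have jv : g m = ζ (m + (t₄ - m)) := by
        rw [show m + (t₄ - m) = t₄ by ring, hgQ]
      have jd : g' m = ζ' (m + (t₄ - m)) := by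
        rw [show m + (t₄ - m) = t₄ by ring, hgu2, hu24]
      have bfull := gbc.trans btail jv jd
      apply finish γ γ' bfull
      · rw [if_pos (le_of_lt hmpos), hg0]
      · rw [if_pos (le_of_lt hmpos), hg0']
      · rw [if_neg (by push_neg; linarith : ¬ m + (s - t₄) ≤ m)]
        rw [show m + (s - t₄) + (t₄ - m) = s by ring]
      · rw [if_neg (by push_neg; linarith : ¬ m + (s - t₄) ≤ m)]
        rw [show m + (s - t₄) + (t₄ - m) = s by ring]
      · linarith
end
end

section
/- Bounded-homotopic paths have the same turning number: let (x,X),(y,Y) ∈ ℝ² × ℝ² with ‖X‖ = ‖Y‖ = 1, and let γ and η be bounded curvature paths with the endpoint condition γ(0) = η(0) = x, γ'(0) = η'(0) = X, final point y and final direction Y. If γ and η are bounded-homotopic, then their total turnings are equal: T(γ) = T(η). Consequently, for m ≠ n the subsets Γ(m) and Γ(n) of paths with turning number m and n respectively are disjoint and no path in Γ(m) is bounded-homotopic to a path in Γ(n). -/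
open Real Set

noncomputable section

section Aux

def dirE (θ : ℝ) : Pt := (WithLp.equiv 2 (Fin 2 → ℝ)).symm ![Real.cos θ, Real.sin θ]

def crossP (v w : Pt) : ℝ := v 0 * w 1 - v 1 * w 0

lemma dirE_zero (θ : ℝ) : dirE θ 0 = Real.cos θ := rfl
lemma dirE_one (θ : ℝ) : dirE θ 1 = Real.sin θ := rfl

lemma norm_sq_pt (v : Pt) : ‖v‖^2 = v 0 ^2 + v 1 ^2 := by
  rw [EuclideanSpace.norm_eq, Real.sq_sqrt (by positivity)]
  simp [Fin.sum_univ_two]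

lemma norm_dirE (θ : ℝ) : ‖dirE θ‖ = 1 := by
  have h := norm_sq_pt (dirE θ)
  rw [dirE_zero, dirE_one] at h
  nlinarith [Real.sin_sq_add_cos_sq θ, norm_nonneg (dirE θ)]

lemma crossP_dirE (a b : ℝ) : crossP (dirE a) (dirE b) = Real.sin (b - a) := by
  rw [Real.sin_sub]; simp [crossP, dirE_zero, dirE_one]; ring

lemma norm_sub_dirE (a b : ℝ) : ‖dirE a - dirE b‖^2 = 2 - 2 * Real.cos (b - a) := by
  have h := norm_sq_pt (dirE a - dirE b)
  have h0 : (dirE a - dirE b) 0 = Real.cos a - Real.cos b := rfl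
  have h1 : (dirE a - dirE b) 1 = Real.sin a - Real.sin b := rfl
  rw [h0, h1] at h
  rw [h, Real.cos_sub]
  nlinarith [Real.sin_sq_add_cos_sq a, Real.sin_sq_add_cos_sq b]

lemma dirE_eq_iff_cos (a b : ℝ) : dirE a = dirE b ↔ Real.cos (b - a) = 1 := by
  constructor
  · intro h
    have := norm_sub_dirE a b
    rw [h] at this; simp at this; linarith
  · intro h
    have := norm_sub_dirE a b
    rw [h] at this
    have : ‖dirE a - dirE b‖ = 0 := by nlinarith [norm_nonneg (dirE a - dirE b)]
    exact sub_eq_zero.mp (norm_eq_zero.mp this)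

lemma exists_dirE (v : Pt) (hv : ‖v‖ = 1) : ∃ β, v = dirE β := by
  set z : ℂ := ⟨v 0, v 1⟩ with hz
  have habs : ‖z‖ = 1 := by
    have : ‖z‖ = Real.sqrt ((v 0)^2 + (v 1)^2) := by
      rw [Complex.norm_def, Complex.normSq_apply]; norm_num [hz]; ring_nf
    rw [this, ← norm_sq_pt v, hv]; simp
  have hz0 : z ≠ 0 := by
    intro h; rw [h] at habs; simp at habs
  refine ⟨Complex.arg z, ?_⟩
  ext i; fin_cases i
  · show v 0 = Real.cos _
    rw [Complex.cos_arg hz0, habs]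
    simp [hz]
  · show v 1 = Real.sin _
    rw [Complex.sin_arg, habs]
    simp [hz]

lemma dirE_periodic (a : ℝ) (k : ℤ) : dirE (a + k * (2 * π)) = dirE a := by
  rw [dirE_eq_iff_cos]
  have : a - (a + k * (2*π)) = (-k) * (2*π) := by push_cast; ring
  rw [this]
  exact (Real.cos_eq_one_iff _).mpr ⟨-k, by push_cast; ring⟩

/-- Lift step: if `w` is a unit vector within distance 1 of `dirE α`, then
`w = dirE (α + arcsin (crossP (dirE α) w))`. -/
lemma lift_step (α : ℝ) (w : Pt) (hw : ‖w‖ = 1) (hclose : ‖dirE α - w‖ ≤ 1) :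
    w = dirE (α + Real.arcsin (crossP (dirE α) w)) := by
  obtain ⟨β, rfl⟩ := exists_dirE w hw
  -- adjust β mod 2π to be close to α
  set k : ℤ := round ((β - α) / (2 * π)) with hk
  set δ : ℝ := β - α - k * (2 * π) with hδ
  have hper : dirE β = dirE (α + δ) := by
    have : β = (α + δ) + k * (2 * π) := by rw [hδ]; ring
    rw [this, dirE_periodic]
  have habs : |δ| ≤ π := by
    have h2 : |(β - α) / (2 * π) - k| ≤ 1/2 := abs_sub_round _
    have hpi : (0:ℝ) < 2 * π := by positivity
    have : |δ| = |(β - α) / (2 * π) - k| * (2 * π) := by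
      rw [hδ, show β - α - ↑k * (2 * π) = ((β - α) / (2*π) - k) * (2*π) by field_simp]
      rw [abs_mul, abs_of_pos hpi]
    rw [this]
    calc |(β - α) / (2 * π) - ↑k| * (2 * π) ≤ 1/2 * (2*π) := by
          apply mul_le_mul_of_nonneg_right h2 (le_of_lt hpi)
      _ = π := by ring
  have hcos : Real.cos δ ≥ 1/2 := by
    have h1 : ‖dirE α - dirE β‖^2 ≤ 1 := by
      nlinarith [norm_nonneg (dirE α - dirE β)]
    have h2 := norm_sub_dirE α β
    have hc : Real.cos (β - α) ≥ 1/2 := by nlinarith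
    have : Real.cos (β - α) = Real.cos δ := by
      rw [show β - α = δ + k * (2*π) by rw [hδ]; ring]
      rw [Real.cos_add_int_mul_two_pi]
    linarith [this ▸ hc]
  have hsmall : |δ| ≤ π / 3 := by
    by_contra h
    push_neg at h
    have h3 : Real.cos |δ| < Real.cos (π/3) := by
      apply Real.cos_lt_cos_of_nonneg_of_le_pi (by positivity) habs h
    rw [Real.cos_pi_div_three, Real.cos_abs] at h3
    linarith
  rw [hper, crossP_dirE]
  have : α + δ - α = δ := by ring
  rw [this]
  have harc : Real.arcsin (Real.sin δ) = δ := by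
    apply Real.arcsin_sin <;> [linarith [abs_le.mp hsmall, Real.pi_gt_three]; skip]
    · linarith [(abs_le.mp hsmall).2, Real.pi_gt_three]
  rw [harc]

lemma continuous_dirE : Continuous dirE := by
  have : Continuous (fun θ => (![Real.cos θ, Real.sin θ] : Fin 2 → ℝ)) := by
    apply continuous_pi
    intro i; fin_cases i
    · exact Real.continuous_cos
    · exact Real.continuous_sin
  exact (PiLp.continuous_toLp 2 (fun _ : Fin 2 => ℝ)).comp this

lemma crossP_self (v : Pt) : crossP v v = 0 := by unfold crossP; ring

/-- A continuous function on `[a,b]` with values in `2πℤ` is constant on endpoints. -/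
lemma rigid_multiples {a b : ℝ} (hab : a ≤ b) {g : ℝ → ℝ}
    (hg : ContinuousOn g (Icc a b))
    (hval : ∀ u ∈ Icc a b, ∃ k : ℤ, g u = k * (2 * π)) : g b = g a := by
  by_contra hne
  obtain ⟨ka, hka⟩ := hval a ⟨le_refl a, hab⟩
  obtain ⟨kb, hkb⟩ := hval b ⟨hab, le_refl b⟩
  have hpi := Real.pi_pos
  rcases lt_or_gt_of_ne hne with hlt | hgt
  · -- g b < g a; find u with g u = g a - π
    have hk : kb < ka := by
      by_contra h
      push_neg at h
      have : g a ≤ g b := by rw [hka, hkb]; have : (ka:ℝ) ≤ kb := by exact_mod_cast h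
                             nlinarith
      linarith
    have hmem : g a - π ∈ Icc (g b) (g a) := by
      constructor
      · rw [hka, hkb]
        have : (kb:ℝ) ≤ ka - 1 := by exact_mod_cast Int.le_sub_one_of_lt hk
        nlinarith
      · linarith
    obtain ⟨u, hu, hgu⟩ := intermediate_value_Icc' hab hg hmem
    obtain ⟨k, hkey⟩ := hval u hu
    rw [hka] at hgu
    rw [hgu] at hkey
    have : (2*k : ℝ) = 2*ka - 1 := by
      have h2 : (2*k:ℝ)*π = (2*ka-1)*π := by linarith
      exact mul_right_cancel₀ (ne_of_gt hpi) h2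
    have : (2*k : ℤ) = 2*ka - 1 := by exact_mod_cast this
    omega
  · have hk : ka < kb := by
      by_contra h
      push_neg at h
      have : g b ≤ g a := by rw [hka, hkb]; have : (kb:ℝ) ≤ ka := by exact_mod_cast h
                             nlinarith
      linarith
    have hmem : g a + π ∈ Icc (g a) (g b) := by
      constructor
      · linarith
      · rw [hka, hkb]
        have : (ka:ℝ) ≤ kb - 1 := by exact_mod_cast Int.le_sub_one_of_lt hk
        nlinarith
    obtain ⟨u, hu, hgu⟩ := intermediate_value_Icc hab hg hmem
    obtain ⟨k, hkey⟩ := hval u hu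
    rw [hka] at hgu
    rw [hgu] at hkey
    have : (2*k : ℝ) = 2*ka + 1 := by
      have h2 : (2*k:ℝ)*π = (2*ka+1)*π := by linarith
      exact mul_right_cancel₀ (ne_of_gt hpi) h2
    have : (2*k : ℤ) = 2*ka + 1 := by exact_mod_cast this
    omega

/-- Two continuous lifts of the same unit-vector path have constant difference. -/
lemma lifts_diff_const {a b : ℝ} (hab : a ≤ b) {θ₁ θ₂ : ℝ → ℝ}
    (h₁ : ContinuousOn θ₁ (Icc a b)) (h₂ : ContinuousOn θ₂ (Icc a b))
    (heq : ∀ u ∈ Icc a b, dirE (θ₁ u) = dirE (θ₂ u)) :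
    θ₁ b - θ₂ b = θ₁ a - θ₂ a := by
  have := rigid_multiples hab (g := fun u => θ₁ u - θ₂ u) (h₁.sub h₂) ?_
  · simpa using this
  intro u hu
  have h := (dirE_eq_iff_cos _ _).mp (heq u hu)
  obtain ⟨n, hn⟩ := (Real.cos_eq_one_iff _).mp h
  exact ⟨-n, by push_cast; linarith⟩

/-- Derivative is close to its value at 0. -/
lemma BCPath.deriv_dist {γ γ' : ℝ → Pt} {s : ℝ} (h : BCPath γ γ' s)
    {a b : ℝ} (ha : a ∈ Icc (0:ℝ) s) (hb : b ∈ Icc (0:ℝ) s) :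
    ‖γ' b - γ' a‖ ≤ |b - a| := by
  have := h.lipDeriv.dist_le_mul b hb a ha
  simpa [dist_eq_norm, Real.dist_eq] using this

/-- Taylor-type bound from 1-Lipschitz derivative. -/
lemma BCPath.taylor {γ γ' : ℝ → Pt} {s : ℝ} (h : BCPath γ γ' s)
    {a b : ℝ} (ha : 0 ≤ a) (hab : a ≤ b) (hb : b ≤ s) :
    ‖γ b - γ a - (b - a) • γ' a‖ ≤ (b - a)^2 := by
  have hsub : Icc a b ⊆ Icc 0 s := Icc_subset_Icc ha hb
  have hd : ∀ t ∈ Icc a b, HasDerivWithinAt (fun t => γ t - t • γ' a)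
      (γ' t - γ' a) (Icc a b) t := by
    intro t ht
    have h2 : HasDerivWithinAt (fun y : ℝ => y • γ' a) ((1:ℝ) • γ' a) (Icc a b) t :=
      (hasDerivWithinAt_id t (Icc a b)).smul_const (γ' a)
    rw [one_smul] at h2
    exact ((h.hasDeriv t (hsub ht)).mono hsub).sub h2
  have hbound : ∀ t ∈ Icc a b, ‖γ' t - γ' a‖ ≤ b - a := by
    intro t ht
    calc ‖γ' t - γ' a‖ ≤ |t - a| := h.deriv_dist (hsub (left_mem_Icc.mpr hab)) (hsub ht)
      _ ≤ b - a := by rw [abs_of_nonneg (by linarith [ht.1])]; linarith [ht.2]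
  have := Convex.norm_image_sub_le_of_norm_hasDerivWithin_le hd hbound
    (convex_Icc a b) (left_mem_Icc.mpr hab) (right_mem_Icc.mpr hab)
  have heq : γ b - b • γ' a - (γ a - a • γ' a) = γ b - γ a - (b - a) • γ' a := by
    rw [sub_smul]; abel
  rw [heq] at this
  calc ‖γ b - γ a - (b - a) • γ' a‖ ≤ (b - a) * ‖b - a‖ := this
    _ = (b - a)^2 := by rw [Real.norm_eq_abs, abs_of_nonneg (by linarith)]; ring

/-- The path is 1-Lipschitz. -/
lemma BCPath.path_dist {γ γ' : ℝ → Pt} {s : ℝ} (h : BCPath γ γ' s)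
    {a b : ℝ} (ha : 0 ≤ a) (hab : a ≤ b) (hb : b ≤ s) :
    ‖γ b - γ a‖ ≤ b - a := by
  have hsub : Icc a b ⊆ Icc 0 s := Icc_subset_Icc ha hb
  have hd : ∀ t ∈ Icc a b, HasDerivWithinAt γ (γ' t) (Icc a b) t :=
    fun t ht => (h.hasDeriv t (hsub ht)).mono hsub
  have := Convex.norm_image_sub_le_of_norm_hasDerivWithin_le hd
    (fun t ht => le_of_eq (h.unitSpeed t (hsub ht))) (convex_Icc a b)
    (left_mem_Icc.mpr hab) (right_mem_Icc.mpr hab)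
  calc ‖γ b - γ a‖ ≤ 1 * ‖b - a‖ := this
    _ = b - a := by rw [one_mul, Real.norm_eq_abs, abs_of_nonneg (by linarith)]

/-- Difference quotient estimate for the derivative. -/
lemma BCPath.quot_est {γ γ' : ℝ → Pt} {s : ℝ} (hbc : BCPath γ γ' s)
    {t h : ℝ} (ht : t ∈ Icc (0:ℝ) s) (hh : 0 < h) (hhs : h ≤ s) :
    ‖γ' t - h⁻¹ • (γ (min t (s - h) + h) - γ (min t (s - h)))‖ ≤ 2 * h := by
  set a := min t (s - h) with ha
  have ha0 : 0 ≤ a := le_min ht.1 (by linarith)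
  have hah : a + h ≤ s := by
    have : a ≤ s - h := min_le_right _ _
    linarith
  have hta : a ≤ t := min_le_left _ _
  have htah : t - a ≤ h := by
    rcases le_or_gt t (s - h) with hc | hc
    · rw [ha, min_eq_left hc]; linarith
    · rw [ha, min_eq_right (le_of_lt hc)]; linarith [ht.2]
  have h1 : ‖h⁻¹ • (γ (a + h) - γ a) - γ' a‖ ≤ h := by
    have := hbc.taylor ha0 (by linarith : a ≤ a + h) hah
    rw [show a + h - a = h by ring] at this
    have heq : h⁻¹ • (γ (a + h) - γ a) - γ' a = h⁻¹ • (γ (a + h) - γ a - h • γ' a) := by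
      rw [smul_sub, smul_sub, smul_sub, smul_smul, inv_mul_cancel₀ (ne_of_gt hh), one_smul]
    rw [heq, norm_smul, Real.norm_eq_abs, abs_of_pos (inv_pos.mpr hh)]
    calc h⁻¹ * ‖γ (a + h) - γ a - h • γ' a‖ ≤ h⁻¹ * h^2 := by
          apply mul_le_mul_of_nonneg_left _ (le_of_lt (inv_pos.mpr hh))
          exact this
      _ = h := by field_simp
  have h2 : ‖γ' t - γ' a‖ ≤ h := by
    calc ‖γ' t - γ' a‖ ≤ |t - a| := hbc.deriv_dist ⟨ha0, by linarith⟩ ht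
      _ ≤ h := by rw [abs_of_nonneg (by linarith)]; exact htah
  calc ‖γ' t - h⁻¹ • (γ (a + h) - γ a)‖
      ≤ ‖γ' t - γ' a‖ + ‖γ' a - h⁻¹ • (γ (a + h) - γ a)‖ := by
        have : γ' t - h⁻¹ • (γ (a + h) - γ a)
            = (γ' t - γ' a) + (γ' a - h⁻¹ • (γ (a + h) - γ a)) := by abel
        rw [this]; exact norm_add_le _ _
    _ ≤ h + h := by
        refine add_le_add h2 ?_
        rw [norm_sub_rev]; exact h1
    _ = 2 * h := by ring

set_option maxHeartbeats 1000000 in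
/-- Key uniform estimate: derivatives of nearby homotopy fibers are uniformly close. -/
lemma deriv_close (F F' : ℝ → ℝ → Pt) (L : ℝ → ℝ) (X : Pt)
    (hbc : ∀ p ∈ Icc (0:ℝ) 1, BCPath (F p) (F' p) (L p))
    (hX : ∀ p ∈ Icc (0:ℝ) 1, F' p 0 = X)
    (hL : ContinuousOn L (Icc (0:ℝ) 1))
    (hG : ContinuousOn (fun q : ℝ × ℝ => F q.1 (q.2 * L q.1)) (Icc (0:ℝ) 1 ×ˢ Icc (0:ℝ) 1))
    (p₀ : ℝ) (hp₀ : p₀ ∈ Icc (0:ℝ) 1) :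
    ∃ δ > 0, ∀ q ∈ Icc (0:ℝ) 1, |q - p₀| < δ →
      ∀ u ∈ Icc (0:ℝ) 1, ‖F' q (u * L q) - F' p₀ (u * L p₀)‖ ≤ 1/2 := by
  have hmem : ∀ q ∈ Icc (0:ℝ) 1, ∀ u ∈ Icc (0:ℝ) 1, u * L q ∈ Icc 0 (L q) := by
    intro q hq u hu
    have h0 := (hbc q hq).nonneg
    exact ⟨mul_nonneg hu.1 h0, by nlinarith [hu.2]⟩
  -- continuity of L at p₀ in ε-δ form
  have hLc : ∀ ε > 0, ∃ δ > 0, ∀ q ∈ Icc (0:ℝ) 1, |q - p₀| < δ → |L q - L p₀| < ε := by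
    intro ε hε
    have := Metric.continuousWithinAt_iff.mp (hL p₀ hp₀) ε hε
    obtain ⟨δ, hδ, hd⟩ := this
    exact ⟨δ, hδ, fun q hq hqd => by
      have := hd hq (by simpa [Real.dist_eq] using hqd)
      simpa [Real.dist_eq] using this⟩
  rcases eq_or_lt_of_le (hbc p₀ hp₀).nonneg with h0 | h0
  · -- L p₀ = 0
    obtain ⟨δ, hδ, hd⟩ := hLc (1/4) (by norm_num)
    refine ⟨δ, hδ, fun q hq hqd u hu => ?_⟩
    have hq0 : F' p₀ (u * L p₀) = X := by
      rw [← h0, mul_zero, hX p₀ hp₀]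
    have hLq : L q ≤ 1/4 := by
      have := hd q hq hqd; rw [← h0] at this
      have := abs_lt.mp this; linarith [this.2]
    rw [hq0, ← hX q hq]
    calc ‖F' q (u * L q) - F' q 0‖ ≤ |u * L q - 0| :=
          (hbc q hq).deriv_dist (by simp [le_refl, (hbc q hq).nonneg]) (hmem q hq u hu)
      _ ≤ 1/2 := by
          rw [sub_zero, abs_of_nonneg (mul_nonneg hu.1 (hbc q hq).nonneg)]
          nlinarith [hu.1, hu.2, (hbc q hq).nonneg]
  · -- L p₀ > 0
    obtain ⟨w, hw⟩ : ∃ w, w = min 1 (1/(24 * L p₀)) := ⟨_, rfl⟩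
    have hw0 : 0 < w := hw ▸ lt_min one_pos (by positivity)
    have hw1 : w ≤ 1 := hw ▸ min_le_left _ _
    have hws : w * L p₀ ≤ 1/24 := by
      have hle : w ≤ 1/(24 * L p₀) := hw ▸ min_le_right _ _
      calc w * L p₀ ≤ (1/(24 * L p₀)) * L p₀ := mul_le_mul_of_nonneg_right hle (le_of_lt h0)
        _ = 1/24 := by field_simp
    have hcomp : IsCompact (Icc (0:ℝ) 1 ×ˢ Icc (0:ℝ) 1) := isCompact_Icc.prod isCompact_Icc
    have hUC := hcomp.uniformContinuousOn_of_continuous hG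
    obtain ⟨ε₂, hε₂⟩ : ∃ e, e = w * L p₀ / 32 := ⟨_, rfl⟩
    have hε₂0 : 0 < ε₂ := by rw [hε₂]; positivity
    obtain ⟨δ₂, hδ₂, hd₂⟩ := Metric.uniformContinuousOn_iff.mp hUC ε₂ hε₂0
    obtain ⟨δ₁, hδ₁, hd₁⟩ := hLc (min (L p₀/16) (L p₀/2)) (by positivity)
    refine ⟨min δ₁ δ₂, lt_min hδ₁ hδ₂, fun q hq hqd u hu => ?_⟩
    have hqd₁ : |q - p₀| < δ₁ := lt_of_lt_of_le hqd (min_le_left _ _)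
    have hqd₂ : |q - p₀| < δ₂ := lt_of_lt_of_le hqd (min_le_right _ _)
    have hLq := hd₁ q hq hqd₁
    have hs2 : L p₀/2 ≤ L q := by
      have h' := abs_lt.mp (lt_of_lt_of_le hLq (min_le_right _ _)); linarith [h'.1]
    have hs32 : L q ≤ 3 * L p₀/2 := by
      have h' := abs_lt.mp (lt_of_lt_of_le hLq (min_le_right _ _)); linarith [h'.2]
    have hLq16 : |L q - L p₀| < L p₀/16 := lt_of_lt_of_le hLq (min_le_left _ _)
    obtain ⟨ua, hua⟩ : ∃ v, v = min u (1 - w) := ⟨_, rfl⟩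
    obtain ⟨ub, hub⟩ : ∃ v, v = ua + w := ⟨_, rfl⟩
    have hua01 : ua ∈ Icc (0:ℝ) 1 :=
      ⟨hua ▸ le_min hu.1 (by linarith), hua ▸ le_trans (min_le_left _ _) hu.2⟩
    have hub01 : ub ∈ Icc (0:ℝ) 1 := by
      constructor
      · rw [hub]; linarith [hua01.1]
      · rw [hub, hua]; have := min_le_right u (1-w); linarith
    have hquot : ∀ r ∈ Icc (0:ℝ) 1, L p₀/2 ≤ L r → L r ≤ 3 * L p₀/2 →
        ‖F' r (u * L r) - (w * L r)⁻¹ • (F r (ub * L r) - F r (ua * L r))‖ ≤ 2 * (w * L r) := by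
      intro r hr hr1 hr2
      have hLr0 : 0 < L r := by linarith
      have hhr : 0 < w * L r := by positivity
      have hhrs : w * L r ≤ L r := by nlinarith
      have hest := (hbc r hr).quot_est (hmem r hr u hu) hhr hhrs
      have hmin : min (u * L r) (L r - w * L r) = ua * L r := by
        rcases le_total u (1 - w) with hc | hc
        · rw [min_eq_left (by nlinarith : u * L r ≤ L r - w * L r), hua, min_eq_left hc]
        · rw [min_eq_right (by nlinarith : L r - w * L r ≤ u * L r), hua, min_eq_right hc]
          ring
      rw [hmin, show ua * L r + w * L r = ub * L r by rw [hub]; ring] at hest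
      exact hest
    have hq1 := hquot q hq hs2 hs32
    have hq0 := hquot p₀ hp₀ (by linarith) (by linarith)
    have hdist : ∀ v ∈ Icc (0:ℝ) 1, ‖F q (v * L q) - F p₀ (v * L p₀)‖ ≤ ε₂ := by
      intro v hv
      have hc := hd₂ (q, v) (mk_mem_prod hq hv) (p₀, v) (mk_mem_prod hp₀ hv) ?_
      · exact le_of_lt (by simpa [dist_eq_norm] using hc)
      · rw [Prod.dist_eq]
        simp only [dist_self, Real.dist_eq]
        calc max |q - p₀| (0:ℝ) = |q - p₀| := max_eq_left (abs_nonneg _)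
          _ < δ₂ := hqd₂
    obtain ⟨Δq, hΔq⟩ : ∃ v : Pt, v = F q (ub * L q) - F q (ua * L q) := ⟨_, rfl⟩
    obtain ⟨Δ0, hΔ0⟩ : ∃ v : Pt, v = F p₀ (ub * L p₀) - F p₀ (ua * L p₀) := ⟨_, rfl⟩
    rw [← hΔq] at hq1
    rw [← hΔ0] at hq0
    have hΔ0n : ‖Δ0‖ ≤ w * L p₀ := by
      rw [hΔ0]
      have hA : 0 ≤ ua * L p₀ := mul_nonneg hua01.1 (le_of_lt h0)
      have hB : ua * L p₀ ≤ ub * L p₀ := by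
        rw [hub]; nlinarith [mul_nonneg hw0.le h0.le]
      have hC : ub * L p₀ ≤ L p₀ := by nlinarith [hub01.2, h0.le]
      have hp := (hbc p₀ hp₀).path_dist hA hB hC
      calc ‖F p₀ (ub * L p₀) - F p₀ (ua * L p₀)‖ ≤ ub * L p₀ - ua * L p₀ := hp
        _ = w * L p₀ := by rw [hub]; ring
    have hΔdiff : ‖Δq - Δ0‖ ≤ 2 * ε₂ := by
      rw [hΔq, hΔ0]
      have h1 := hdist ub hub01
      have h2 := hdist ua hua01
      calc ‖F q (ub * L q) - F q (ua * L q) - (F p₀ (ub * L p₀) - F p₀ (ua * L p₀))‖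
          = ‖(F q (ub * L q) - F p₀ (ub * L p₀)) - (F q (ua * L q) - F p₀ (ua * L p₀))‖ := by
            congr 1; abel
        _ ≤ ‖F q (ub * L q) - F p₀ (ub * L p₀)‖ + ‖F q (ua * L q) - F p₀ (ua * L p₀)‖ :=
            norm_sub_le _ _
        _ ≤ 2 * ε₂ := by linarith
    have hLq0 : 0 < L q := by linarith
    have hwq : 0 < w * L q := by positivity
    have hwp : 0 < w * L p₀ := by positivity
    have hmid : ‖(w * L q)⁻¹ • Δq - (w * L p₀)⁻¹ • Δ0‖ ≤ 1/4 := by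
      have split : (w * L q)⁻¹ • Δq - (w * L p₀)⁻¹ • Δ0
          = (w * L q)⁻¹ • (Δq - Δ0) + ((w * L q)⁻¹ - (w * L p₀)⁻¹) • Δ0 := by
        module
      rw [split]
      have t1 : ‖(w * L q)⁻¹ • (Δq - Δ0)‖ ≤ 1/8 := by
        rw [norm_smul, Real.norm_eq_abs, abs_of_pos (inv_pos.mpr hwq)]
        calc (w * L q)⁻¹ * ‖Δq - Δ0‖ ≤ (w * L q)⁻¹ * (2 * ε₂) :=
              mul_le_mul_of_nonneg_left hΔdiff (le_of_lt (inv_pos.mpr hwq))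
          _ = 2 * (w * L p₀ / 32) / (w * L q) := by rw [hε₂]; field_simp
          _ ≤ 1/8 := by
              rw [div_le_iff₀ hwq]
              nlinarith [hw0]
      have t2 : ‖((w * L q)⁻¹ - (w * L p₀)⁻¹) • Δ0‖ ≤ 1/8 := by
        rw [norm_smul, Real.norm_eq_abs]
        have habs : |(w * L q)⁻¹ - (w * L p₀)⁻¹| = |L p₀ - L q| / (L q * L p₀ * w) := by
          rw [show (w * L q)⁻¹ - (w * L p₀)⁻¹ = (L p₀ - L q) / (L q * L p₀ * w) by
            field_simp]
          rw [abs_div, abs_of_pos (show (0:ℝ) < L q * L p₀ * w by positivity)]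
        rw [habs]
        calc |L p₀ - L q| / (L q * L p₀ * w) * ‖Δ0‖
            ≤ (L p₀/16) / (L q * L p₀ * w) * (w * L p₀) := by
              apply mul_le_mul _ hΔ0n (norm_nonneg _) (by positivity)
              apply div_le_div_of_nonneg_right _ (by positivity)
              rw [abs_sub_comm]; exact le_of_lt hLq16
          _ ≤ 1/8 := by
              rw [div_mul_eq_mul_div, div_le_iff₀ (by positivity)]
              nlinarith [hs2]
      calc ‖(w * L q)⁻¹ • (Δq - Δ0) + ((w * L q)⁻¹ - (w * L p₀)⁻¹) • Δ0‖
          ≤ ‖(w * L q)⁻¹ • (Δq - Δ0)‖ + ‖((w * L q)⁻¹ - (w * L p₀)⁻¹) • Δ0‖ := norm_add_le _ _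
        _ ≤ 1/4 := by linarith
    obtain ⟨A1, hA1⟩ : ∃ v : Pt, v = F' q (u * L q) - (w * L q)⁻¹ • Δq := ⟨_, rfl⟩
    obtain ⟨A2, hA2⟩ : ∃ v : Pt, v = (w * L q)⁻¹ • Δq - (w * L p₀)⁻¹ • Δ0 := ⟨_, rfl⟩
    obtain ⟨A3, hA3⟩ : ∃ v : Pt, v = (w * L p₀)⁻¹ • Δ0 - F' p₀ (u * L p₀) := ⟨_, rfl⟩
    have hsplit : F' q (u * L q) - F' p₀ (u * L p₀) = A1 + A2 + A3 := by
      rw [hA1, hA2, hA3]; module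
    have hn1 : ‖A1‖ ≤ 2 * (w * L q) := by rw [hA1]; exact hq1
    have hn2 : ‖A2‖ ≤ 1/4 := by rw [hA2]; exact hmid
    have hn3 : ‖A3‖ ≤ 2 * (w * L p₀) := by rw [hA3, norm_sub_rev]; exact hq0
    calc ‖F' q (u * L q) - F' p₀ (u * L p₀)‖ = ‖A1 + A2 + A3‖ := by rw [hsplit]
      _ ≤ ‖A1 + A2‖ + ‖A3‖ := norm_add_le _ _
      _ ≤ ‖A1‖ + ‖A2‖ + ‖A3‖ := by linarith [norm_add_le A1 A2]
      _ ≤ 2 * (w * L q) + 1/4 + 2 * (w * L p₀) := by linarith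
      _ ≤ 1/2 := by nlinarith [hws, hs32, hw0]

lemma proj_lip (a b : ℝ) : |max 0 (min 1 a) - max 0 (min 1 b)| ≤ |a - b| := by
  have h1 : |max 0 (min 1 a) - max 0 (min 1 b)| ≤ |min 1 a - min 1 b| := by
    rw [max_comm 0 (min 1 a), max_comm 0 (min 1 b)]
    exact abs_max_sub_max_le_abs _ _ _
  have h2 : |min 1 a - min 1 b| ≤ |a - b| := by
    have := abs_min_sub_min_le_max 1 a 1 b
    simpa using this
  exact le_trans h1 h2

lemma proj_mem (a : ℝ) : max 0 (min 1 a) ∈ Icc (0:ℝ) 1 :=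
  ⟨le_max_left _ _, max_le (by norm_num) (min_le_left _ _)⟩

lemma continuousOn_coord (i : Fin 2) {D : ℝ → Pt} {s : Set ℝ} (h : ContinuousOn D s) :
    ContinuousOn (fun u => D u i) s :=
  ((continuous_apply i).comp (PiLp.continuous_ofLp 2 (fun _ : Fin 2 => ℝ))).comp_continuousOn h

/-- Transfer a continuous lift from one unit-vector path to a uniformly close one. -/
lemma transfer_lift {D1 D2 : ℝ → Pt}
    (hc1 : ContinuousOn D1 (Icc (0:ℝ) 1)) (hc2 : ContinuousOn D2 (Icc (0:ℝ) 1))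
    (hu2 : ∀ u ∈ Icc (0:ℝ) 1, ‖D2 u‖ = 1)
    (hclose : ∀ u ∈ Icc (0:ℝ) 1, ‖D1 u - D2 u‖ ≤ 1)
    {θ1 : ℝ → ℝ} (hθc : ContinuousOn θ1 (Icc (0:ℝ) 1))
    (hlift : ∀ u ∈ Icc (0:ℝ) 1, D1 u = dirE (θ1 u)) :
    ∃ θ2 : ℝ → ℝ, ContinuousOn θ2 (Icc (0:ℝ) 1) ∧
      (∀ u ∈ Icc (0:ℝ) 1, D2 u = dirE (θ2 u)) ∧
      (∀ u ∈ Icc (0:ℝ) 1, D1 u = D2 u → θ2 u = θ1 u) := by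
  refine ⟨fun u => θ1 u + Real.arcsin (crossP (D1 u) (D2 u)), ?_, ?_, ?_⟩
  · apply hθc.add
    apply Real.continuous_arcsin.comp_continuousOn
    apply ContinuousOn.sub
    · exact (continuousOn_coord 0 hc1).mul (continuousOn_coord 1 hc2)
    · exact (continuousOn_coord 1 hc1).mul (continuousOn_coord 0 hc2)
  · intro u hu
    have h := lift_step (θ1 u) (D2 u) (hu2 u hu) (by rw [← hlift u hu]; exact hclose u hu)
    rw [← hlift u hu] at h
    exact h
  · intro u hu he
    show θ1 u + Real.arcsin (crossP (D1 u) (D2 u)) = θ1 u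
    rw [← he, crossP_self, Real.arcsin_zero, add_zero]

lemma turningLift_dirE {γ' : ℝ → Pt} {s : ℝ} {θ : ℝ → ℝ} (h : TurningLift γ' s θ) :
    ∀ t ∈ Icc (0:ℝ) s, γ' t = dirE (θ t) := h.2

end Aux

/-- Bounded-homotopic paths have the same total turning. -/
theorem bddHomotopic_total_turning_eq (x X y Y : Pt) (hX : ‖X‖ = 1) (hY : ‖Y‖ = 1)
    (γ γ' η η' : ℝ → Pt) (s₀ s₁ : ℝ)
    (hγ : BCPath γ γ' s₀) (hη : BCPath η η' s₁)
    (heγ : EndCond γ γ' s₀ x X y Y) (heη : EndCond η η' s₁ x X y Y)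
    (hhom : BddHomotopic x X y Y γ s₀ η s₁)
    (θγ θη : ℝ → ℝ) (hθγ : TurningLift γ' s₀ θγ) (hθη : TurningLift η' s₁ θη) :
    θγ s₀ - θγ 0 = θη s₁ - θη 0 := by
  obtain ⟨F, F', L, hall, hL0, hL1, hF0, hF1, hLcont, hGc⟩ := hhom
  have h01 : (0:ℝ) ∈ Icc (0:ℝ) 1 := by norm_num
  have h11 : (1:ℝ) ∈ Icc (0:ℝ) 1 := by norm_num
  have hbc : ∀ p ∈ Icc (0:ℝ) 1, BCPath (F p) (F' p) (L p) := fun p hp => (hall p hp).1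
  have hX' : ∀ p ∈ Icc (0:ℝ) 1, F' p 0 = X := fun p hp => (hall p hp).2.2.1
  have hY' : ∀ p ∈ Icc (0:ℝ) 1, F' p (L p) = Y := fun p hp => (hall p hp).2.2.2.2
  have hmem : ∀ p ∈ Icc (0:ℝ) 1, ∀ u ∈ Icc (0:ℝ) 1, u * L p ∈ Icc 0 (L p) := by
    intro p hp u hu
    have h0 := (hbc p hp).nonneg
    exact ⟨mul_nonneg hu.1 h0, by nlinarith [hu.2]⟩
  have hDcont : ∀ p ∈ Icc (0:ℝ) 1, ContinuousOn (fun u => F' p (u * L p)) (Icc (0:ℝ) 1) := by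
    intro p hp
    exact (hbc p hp).contDeriv.comp ((continuous_id.mul continuous_const).continuousOn)
      (fun u hu => hmem p hp u hu)
  have hDunit : ∀ p ∈ Icc (0:ℝ) 1, ∀ u ∈ Icc (0:ℝ) 1, ‖F' p (u * L p)‖ = 1 :=
    fun p hp u hu => (hbc p hp).unitSpeed _ (hmem p hp u hu)
  -- the transfer step
  have key : ∀ p ∈ Icc (0:ℝ) 1, ∀ q ∈ Icc (0:ℝ) 1,
      (∀ u ∈ Icc (0:ℝ) 1, ‖F' p (u * L p) - F' q (u * L q)‖ ≤ 1) →
      (∃ θ : ℝ → ℝ, ContinuousOn θ (Icc (0:ℝ) 1) ∧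
        (∀ u ∈ Icc (0:ℝ) 1, F' p (u * L p) = dirE (θ u)) ∧ θ 0 = θγ 0 ∧ θ 1 = θγ s₀) →
      (∃ θ : ℝ → ℝ, ContinuousOn θ (Icc (0:ℝ) 1) ∧
        (∀ u ∈ Icc (0:ℝ) 1, F' q (u * L q) = dirE (θ u)) ∧ θ 0 = θγ 0 ∧ θ 1 = θγ s₀) := by
    intro p hp q hq hclose ⟨θ1, hθc, hθl, hθ0, hθ1⟩
    obtain ⟨θ2, hc2, hl2, hagree⟩ := transfer_lift (hDcont p hp) (hDcont q hq)
      (hDunit q hq) hclose hθc hθl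
    have he0 : F' p (0 * L p) = F' q (0 * L q) := by
      rw [zero_mul, zero_mul, hX' p hp, hX' q hq]
    have he1 : F' p (1 * L p) = F' q (1 * L q) := by
      rw [one_mul, one_mul, hY' p hp, hY' q hq]
    exact ⟨θ2, hc2, hl2, (hagree 0 h01 he0).trans hθ0, (hagree 1 h11 he1).trans hθ1⟩
  -- local constancy under the homotopy
  have hloc : IsLocallyConstant (fun r : ℝ =>
      ∃ θ : ℝ → ℝ, ContinuousOn θ (Icc (0:ℝ) 1) ∧
        (∀ u ∈ Icc (0:ℝ) 1, F' (max 0 (min 1 r)) (u * L (max 0 (min 1 r))) = dirE (θ u)) ∧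
        θ 0 = θγ 0 ∧ θ 1 = θγ s₀) := by
    rw [IsLocallyConstant.iff_eventually_eq]
    intro r
    obtain ⟨δ, hδ, hd⟩ := deriv_close F F' L X hbc hX' hLcont hGc
      (max 0 (min 1 r)) (proj_mem r)
    rw [Metric.eventually_nhds_iff]
    refine ⟨δ, hδ, fun y hy => ?_⟩
    rw [Real.dist_eq] at hy
    have hyd : |max 0 (min 1 y) - max 0 (min 1 r)| < δ := lt_of_le_of_lt (proj_lip y r) hy
    have hclose := hd (max 0 (min 1 y)) (proj_mem y) hyd
    apply propext
    constructor
    · apply key _ (proj_mem y) _ (proj_mem r)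
      intro u hu
      exact le_trans (hclose u hu) (by norm_num)
    · apply key _ (proj_mem r) _ (proj_mem y)
      intro u hu
      rw [norm_sub_rev]
      exact le_trans (hclose u hu) (by norm_num)
  -- the property holds at p = 0
  have hP0 : ∃ θ : ℝ → ℝ, ContinuousOn θ (Icc (0:ℝ) 1) ∧
      (∀ u ∈ Icc (0:ℝ) 1, F' 0 (u * L 0) = dirE (θ u)) ∧ θ 0 = θγ 0 ∧ θ 1 = θγ s₀ := by
    have hγ0 : γ' 0 = dirE (θγ 0) :=
      turningLift_dirE hθγ 0 ⟨le_refl 0, hγ.nonneg⟩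
    rcases eq_or_lt_of_le hγ.nonneg with h | h
    · -- s₀ = 0
      refine ⟨fun _ => θγ 0, continuousOn_const, ?_, rfl, by rw [← h]⟩
      intro u hu
      rw [hL0, ← h, mul_zero, hX' 0 h01, ← heγ.2.1, hγ0]
    · -- s₀ > 0
      have hder : ∀ t ∈ Icc (0:ℝ) s₀, F' 0 t = γ' t := by
        intro t ht
        have hud : UniqueDiffWithinAt ℝ (Icc (0:ℝ) s₀) t := (uniqueDiffOn_Icc h) t ht
        have h1 : HasDerivWithinAt γ (γ' t) (Icc (0:ℝ) s₀) t := hγ.hasDeriv t ht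
        have h2 : HasDerivWithinAt (F 0) (F' 0 t) (Icc (0:ℝ) (L 0)) t :=
          (hbc 0 h01).hasDeriv t (by rw [hL0]; exact ht)
        rw [hL0] at h2
        have h3 : HasDerivWithinAt γ (F' 0 t) (Icc (0:ℝ) s₀) t :=
          h2.congr (fun z hz => (hF0 z hz).symm) ((hF0 t ht).symm)
        exact (h3.derivWithin hud).symm.trans (h1.derivWithin hud)
      have hmaps : ∀ u ∈ Icc (0:ℝ) 1, u * s₀ ∈ Icc (0:ℝ) s₀ := by
        intro u hu
        exact ⟨mul_nonneg hu.1 hγ.nonneg, by nlinarith [hu.2, hγ.nonneg]⟩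
      refine ⟨fun u => θγ (u * s₀), ?_, ?_, by show θγ (0 * s₀) = θγ 0; rw [zero_mul],
        by show θγ (1 * s₀) = θγ s₀; rw [one_mul]⟩
      · exact hθγ.1.comp ((continuous_id.mul continuous_const).continuousOn) hmaps
      · intro u hu
        rw [hL0, hder (u * s₀) (hmaps u hu)]
        exact turningLift_dirE hθγ _ (hmaps u hu)
  -- transport to p = 1 by local constancy on the connected line
  have heq01 := hloc.apply_eq_of_isPreconnected isPreconnected_univ
    (mem_univ (1:ℝ)) (mem_univ (0:ℝ))
  have hproj0 : max 0 (min 1 (0:ℝ)) = 0 := by norm_num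
  have hproj1 : max 0 (min 1 (1:ℝ)) = 1 := by norm_num
  rw [hproj0, hproj1] at heq01
  have hP1 : ∃ θ : ℝ → ℝ, ContinuousOn θ (Icc (0:ℝ) 1) ∧
      (∀ u ∈ Icc (0:ℝ) 1, F' 1 (u * L 1) = dirE (θ u)) ∧ θ 0 = θγ 0 ∧ θ 1 = θγ s₀ :=
    heq01 ▸ hP0
  obtain ⟨θ, hθc, hθl, hθ0, hθ1⟩ := hP1
  have hη0 : η' 0 = dirE (θη 0) := turningLift_dirE hθη 0 ⟨le_refl 0, hη.nonneg⟩
  rcases eq_or_lt_of_le hη.nonneg with h | h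
  · -- s₁ = 0
    have heqd : ∀ u ∈ Icc (0:ℝ) 1, dirE (θ u) = dirE ((fun _ => θγ 0) u) := by
      intro u hu
      rw [← hθl u hu, hL1, ← h, mul_zero, hX' 1 h11, ← heγ.2.1,
        turningLift_dirE hθγ 0 ⟨le_refl 0, hγ.nonneg⟩]
    have := lifts_diff_const zero_le_one hθc continuousOn_const heqd
    rw [hθ0, hθ1] at this
    rw [← h]
    simp at this ⊢
    linarith
  · -- s₁ > 0
    have hder : ∀ t ∈ Icc (0:ℝ) s₁, F' 1 t = η' t := by
      intro t ht
      have hud : UniqueDiffWithinAt ℝ (Icc (0:ℝ) s₁) t := (uniqueDiffOn_Icc h) t ht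
      have h1 : HasDerivWithinAt η (η' t) (Icc (0:ℝ) s₁) t := hη.hasDeriv t ht
      have h2 : HasDerivWithinAt (F 1) (F' 1 t) (Icc (0:ℝ) (L 1)) t :=
        (hbc 1 h11).hasDeriv t (by rw [hL1]; exact ht)
      rw [hL1] at h2
      have h3 : HasDerivWithinAt η (F' 1 t) (Icc (0:ℝ) s₁) t :=
        h2.congr (fun z hz => (hF1 z hz).symm) ((hF1 t ht).symm)
      exact (h3.derivWithin hud).symm.trans (h1.derivWithin hud)
    have hmaps : ∀ u ∈ Icc (0:ℝ) 1, u * s₁ ∈ Icc (0:ℝ) s₁ := by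
      intro u hu
      exact ⟨mul_nonneg hu.1 hη.nonneg, by nlinarith [hu.2, hη.nonneg]⟩
    have hc2 : ContinuousOn (fun u => θη (u * s₁)) (Icc (0:ℝ) 1) :=
      hθη.1.comp ((continuous_id.mul continuous_const).continuousOn) hmaps
    have heqd : ∀ u ∈ Icc (0:ℝ) 1, dirE (θ u) = dirE ((fun u => θη (u * s₁)) u) := by
      intro u hu
      rw [← hθl u hu, hL1, hder (u * s₁) (hmaps u hu)]
      exact turningLift_dirE hθη _ (hmaps u hu)
    have := lifts_diff_const zero_le_one hθc hc2 heqd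
    simp only [one_mul, zero_mul] at this
    rw [hθ0, hθ1] at this
    linarith
end
end
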